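/- arXiv:1511.04769 — 11 statements merged into one kernel-verified Lean document; each statement's English description precedes it below -/
import Mathlib

section
/- Let r > 0, b > 0, s > 1 and 0 < μ₁ < μ₂ with f(N_c(μ₂), μ₂) < 0. Then f(N_c(μ₁), μ₁) < 0, so there exist positive numbers N₁^−, N₁^+, N₂^−, N₂^+ with f(N₁^±, μ₁) = f(N₂^±, μ₂) = 0, N₁^− < N_c(μ₁) < N₁^+ and N₂^− < N_c(μ₂) < N₂^+; moreover these roots satisfy N₁^− < N₂^− < N₂^+ < N₁^+. -/
/-- For r, b > 0, s > 1 and 0 < μ₁ < μ₂ with f(N_c(μ₂), μ₂) < 0, one has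
f(N_c(μ₁), μ₁) < 0 and there exist positive roots N₁⁻ < N_c(μ₁) < N₁⁺ of f(·, μ₁)
and N₂⁻ < N_c(μ₂) < N₂⁺ of f(·, μ₂) with N₁⁻ < N₂⁻ < N₂⁺ < N₁⁺. -/
theorem stmt2 (r b s μ₁ μ₂ : ℝ) (hr : 0 < r) (hb : 0 < b) (hs : 1 < s)
    (hμ₁ : 0 < μ₁) (h12 : μ₁ < μ₂)
    (f : ℝ → ℝ → ℝ) (hf : ∀ N μ, f N μ = μ * (b + N ^ s) - r * N ^ (s - 1))
    (Nc : ℝ → ℝ) (hNc : ∀ μ, Nc μ = r * (s - 1) / (μ * s))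
    (hneg : f (Nc μ₂) μ₂ < 0) :
    f (Nc μ₁) μ₁ < 0 ∧
    ∃ N1m N1p N2m N2p : ℝ,
      0 < N1m ∧ 0 < N2m ∧
      f N1m μ₁ = 0 ∧ f N1p μ₁ = 0 ∧ f N2m μ₂ = 0 ∧ f N2p μ₂ = 0 ∧
      N1m < Nc μ₁ ∧ Nc μ₁ < N1p ∧ N2m < Nc μ₂ ∧ Nc μ₂ < N2p ∧
      N1m < N2m ∧ N2m < N2p ∧ N2p < N1p := by
  have hs0 : (0 : ℝ) < s := by linarith
  have hs1 : (0 : ℝ) < s - 1 := by linarith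
  have hμ₂ : (0 : ℝ) < μ₂ := lt_trans hμ₁ h12
  -- continuity
  have hcont : ∀ μ : ℝ, Continuous (fun N : ℝ => μ * (b + N ^ s) - r * N ^ (s - 1)) := by
    intro μ
    rw [continuous_iff_continuousAt]
    intro N
    have h1 : ContinuousAt (fun N : ℝ => N ^ s) N :=
      Real.continuousAt_rpow_const N s (Or.inr (by linarith))
    have h2 : ContinuousAt (fun N : ℝ => N ^ (s - 1)) N :=
      Real.continuousAt_rpow_const N (s - 1) (Or.inr (by linarith))
    exact (continuousAt_const.mul (continuousAt_const.add h1)).sub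
      (continuousAt_const.mul h2)
  -- value at 0
  have hzero : ∀ μ : ℝ, 0 < μ → 0 < μ * (b + (0:ℝ) ^ s) - r * (0:ℝ) ^ (s - 1) := by
    intro μ hμ
    rw [Real.zero_rpow (ne_of_gt hs0), Real.zero_rpow (ne_of_gt hs1)]
    simpa using mul_pos hμ hb
  -- split identity for N > 0
  have hsplit : ∀ μ N : ℝ, 0 < N →
      μ * (b + N ^ s) - r * N ^ (s - 1) = μ * b + N ^ (s - 1) * (μ * N - r) := by
    intro μ N hN
    have hNs : N ^ s = N ^ (s - 1) * N := by
      rw [← Real.rpow_add_one (ne_of_gt hN) (s - 1)]; norm_num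
    rw [hNs]; ring
  -- positivity of Nc
  have hNcpos : ∀ μ : ℝ, 0 < μ → 0 < Nc μ := by
    intro μ hμ
    rw [hNc]
    exact div_pos (mul_pos hr hs1) (mul_pos hμ hs0)
  have hNc1 := hNcpos μ₁ hμ₁
  have hNc2 := hNcpos μ₂ hμ₂
  -- Nc is decreasing in μ
  have hNclt : Nc μ₂ < Nc μ₁ := by
    rw [hNc, hNc]
    apply div_lt_div_of_pos_left (mul_pos hr hs1) (mul_pos hμ₁ hs0)
    exact mul_lt_mul_of_pos_right h12 hs0
  -- value at Nc
  have hval : ∀ μ : ℝ, 0 < μ →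
      μ * (b + (Nc μ) ^ s) - r * (Nc μ) ^ (s - 1) = μ * b - r / s * (Nc μ) ^ (s - 1) := by
    intro μ hμ
    rw [hsplit μ (Nc μ) (hNcpos μ hμ)]
    have h1 : μ * Nc μ - r = -(r / s) := by
      rw [hNc]
      field_simp
      ring
    rw [h1]; ring
  -- f(Nc μ₁, μ₁) < 0
  have hneg2 : μ₂ * b - r / s * (Nc μ₂) ^ (s - 1) < 0 := by
    rw [← hval μ₂ hμ₂, ← hf]; exact hneg
  have hneg1 : f (Nc μ₁) μ₁ < 0 := by
    rw [hf, hval μ₁ hμ₁]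
    have hrp : (Nc μ₂) ^ (s - 1) < (Nc μ₁) ^ (s - 1) :=
      Real.rpow_lt_rpow (le_of_lt hNc2) hNclt hs1
    have hrs : 0 < r / s := div_pos hr hs0
    nlinarith [mul_lt_mul_of_pos_left hrp hrs]
  -- comparison: roots of f(·,μ₂) are negative points of f(·,μ₁)
  have hcomp : ∀ N : ℝ, 0 ≤ N → μ₂ * (b + N ^ s) - r * N ^ (s - 1) = 0 →
      μ₁ * (b + N ^ s) - r * N ^ (s - 1) < 0 := by
    intro N hN h0
    have h1 : 0 < b + N ^ s := by
      have := Real.rpow_nonneg hN s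
      linarith
    nlinarith
  -- root N2m in (0, Nc μ₂)
  obtain ⟨N2m, hN2m, hfN2m⟩ :
      ∃ x ∈ Set.Ioo (0:ℝ) (Nc μ₂), μ₂ * (b + x ^ s) - r * x ^ (s - 1) = 0 := by
    have := intermediate_value_Ioo' (le_of_lt hNc2) (hcont μ₂).continuousOn
      (Set.mem_Ioo.mpr ⟨by rw [hf] at hneg; exact hneg, hzero μ₂ hμ₂⟩)
    obtain ⟨x, hx, hgx⟩ := this
    exact ⟨x, hx, hgx⟩
  -- root N2p in (Nc μ₂, M₂)
  have hbig : ∀ μ M : ℝ, 0 < μ → r / μ + 1 ≤ M → 0 < M →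
      0 < μ * (b + M ^ s) - r * M ^ (s - 1) := by
    intro μ M hμ hM hM0
    rw [hsplit μ M hM0]
    have h1 : 0 < μ * M - r := by
      have : r / μ * μ = r := div_mul_cancel₀ r (ne_of_gt hμ)
      nlinarith
    have h2 : 0 < M ^ (s - 1) := Real.rpow_pos_of_pos hM0 (s - 1)
    nlinarith [mul_pos hμ hb]
  obtain ⟨N2p, hN2p, hfN2p⟩ :
      ∃ x ∈ Set.Ioo (Nc μ₂) (max (Nc μ₂ + 1) (r / μ₂ + 1)),
        μ₂ * (b + x ^ s) - r * x ^ (s - 1) = 0 := by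
    set M := max (Nc μ₂ + 1) (r / μ₂ + 1) with hM
    have hMge : Nc μ₂ ≤ M := le_trans (by linarith) (le_max_left _ _)
    have hM0 : 0 < M := lt_of_lt_of_le hNc2 hMge
    have hpos := hbig μ₂ M hμ₂ (le_max_right _ _) hM0
    have := intermediate_value_Ioo hMge (hcont μ₂).continuousOn
      (Set.mem_Ioo.mpr ⟨by rw [hf] at hneg; exact hneg, hpos⟩)
    obtain ⟨x, hx, hgx⟩ := this
    exact ⟨x, hx, hgx⟩
  -- root N1m in (0, N2m)
  have hfN2m1 : μ₁ * (b + N2m ^ s) - r * N2m ^ (s - 1) < 0 :=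
    hcomp N2m (le_of_lt hN2m.1) hfN2m
  obtain ⟨N1m, hN1m, hfN1m⟩ :
      ∃ x ∈ Set.Ioo (0:ℝ) N2m, μ₁ * (b + x ^ s) - r * x ^ (s - 1) = 0 := by
    have := intermediate_value_Ioo' (le_of_lt hN2m.1) (hcont μ₁).continuousOn
      (Set.mem_Ioo.mpr ⟨hfN2m1, hzero μ₁ hμ₁⟩)
    obtain ⟨x, hx, hgx⟩ := this
    exact ⟨x, hx, hgx⟩
  -- root N1p in (max N2p (Nc μ₁), M₁)
  have hfN2p1 : μ₁ * (b + N2p ^ s) - r * N2p ^ (s - 1) < 0 :=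
    hcomp N2p (le_of_lt (lt_trans hNc2 hN2p.1)) hfN2p
  obtain ⟨N1p, hN1p, hfN1p⟩ :
      ∃ x ∈ Set.Ioo (max N2p (Nc μ₁)) (max (max N2p (Nc μ₁) + 1) (r / μ₁ + 1)),
        μ₁ * (b + x ^ s) - r * x ^ (s - 1) = 0 := by
    set a := max N2p (Nc μ₁) with ha
    have ha0 : 0 < a := lt_of_lt_of_le hNc1 (le_max_right _ _)
    have hfa : μ₁ * (b + a ^ s) - r * a ^ (s - 1) < 0 := by
      rcases max_choice N2p (Nc μ₁) with h | h
      · rw [ha, h]; exact hfN2p1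
      · rw [ha, h]; rw [hf, hval μ₁ hμ₁] at hneg1; rw [hval μ₁ hμ₁]; exact hneg1
    set M := max (a + 1) (r / μ₁ + 1) with hM
    have hMge : a ≤ M := le_trans (by linarith) (le_max_left _ _)
    have hM0 : 0 < M := lt_of_lt_of_le ha0 hMge
    have hpos := hbig μ₁ M hμ₁ (le_max_right _ _) hM0
    have := intermediate_value_Ioo hMge (hcont μ₁).continuousOn
      (Set.mem_Ioo.mpr ⟨hfa, hpos⟩)
    obtain ⟨x, hx, hgx⟩ := this
    exact ⟨x, hx, hgx⟩
  refine ⟨hneg1, N1m, N1p, N2m, N2p, hN1m.1, hN2m.1, ?_, ?_, ?_, ?_, ?_, ?_, ?_, ?_, ?_, ?_, ?_⟩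
  · rw [hf]; exact hfN1m
  · rw [hf]; exact hfN1p
  · rw [hf]; exact hfN2m
  · rw [hf]; exact hfN2p
  · exact lt_trans hN1m.2 (lt_trans hN2m.2 hNclt)
  · exact lt_of_le_of_lt (le_max_right _ _) hN1p.1
  · exact hN2m.2
  · exact hN2p.1
  · exact hN1m.2
  · exact lt_trans hN2m.2 hN2p.1
  · exact lt_of_le_of_lt (le_max_left _ _) hN1p.1
end

section
/- Let μ₁ > 0, μ₂ > 0 and rd > 0. Then the equation (1 − x)² = (μ₁·rd/μ₂)·x² + (x(1 − x)/μ₂)·((1 + rd)x − 1) has exactly one solution x₁* in the open interval (0, 1). -/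
/-- For μ₁, μ₂, rd > 0, the equation
(1 − x)² = (μ₁·rd/μ₂)x² + (x(1 − x)/μ₂)((1 + rd)x − 1)
has exactly one solution in (0, 1). -/
theorem stmt6 (μ₁ μ₂ rd : ℝ) (hμ₁ : 0 < μ₁) (hμ₂ : 0 < μ₂) (hrd : 0 < rd) :
    ∃! x : ℝ, x ∈ Set.Ioo (0 : ℝ) 1 ∧
      (1 - x) ^ 2 =
        (μ₁ * rd / μ₂) * x ^ 2 + (x * (1 - x) / μ₂) * ((1 + rd) * x - 1) := by
  set c : ℝ := rd * (1 + μ₁) with hc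
  set K : ℝ → ℝ := fun t => (μ₂ * t ^ 3 + (μ₂ + 1) * t ^ 2 - μ₁ * rd) / t with hK
  -- strict monotonicity of K on (0,∞)
  have hmono : StrictMonoOn K (Set.Ioi (0:ℝ)) := by
    intro a ha b hb hab
    have ha' : (0:ℝ) < a := ha
    have hb' : (0:ℝ) < b := hb
    have hba : (0:ℝ) < b - a := by linarith
    simp only [hK]
    rw [div_lt_div_iff₀ ha' hb']
    have h1 : 0 < μ₂ * (a * b * (b - a) * (a + b)) := by positivity
    have h2 : 0 < (μ₂ + 1) * (a * b * (b - a)) := by positivity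
    have h3 : 0 < μ₁ * rd * (b - a) := by positivity
    nlinarith [h1, h2, h3]
  -- the key equivalence via t = (1-x)/x
  have hiff : ∀ x : ℝ, x ∈ Set.Ioo (0:ℝ) 1 →
      (((1 - x) ^ 2 = (μ₁ * rd / μ₂) * x ^ 2 + (x * (1 - x) / μ₂) * ((1 + rd) * x - 1))
        ↔ K ((1 - x) / x) = c) := by
    intro x hx
    have hx0 : x ≠ 0 := ne_of_gt hx.1
    have hx1 : (1 : ℝ) - x ≠ 0 := by have := hx.2; intro h; linarith [h]
    set t : ℝ := (1 - x) / x with ht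
    have ht0 : t ≠ 0 := div_ne_zero hx1 hx0
    have h2ne : μ₂ / x ^ 3 ≠ 0 := by positivity
    have key : μ₂ * t ^ 3 + (μ₂ + 1) * t ^ 2 - μ₁ * rd - c * t
        = (μ₂ / x ^ 3) * ((1 - x) ^ 2 -
            ((μ₁ * rd / μ₂) * x ^ 2 + (x * (1 - x) / μ₂) * ((1 + rd) * x - 1))) := by
      rw [ht, hc]
      field_simp
      ring
    simp only [hK]
    constructor
    · intro h
      have h0 : (1 - x) ^ 2 -
          ((μ₁ * rd / μ₂) * x ^ 2 + (x * (1 - x) / μ₂) * ((1 + rd) * x - 1)) = 0 :=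
        sub_eq_zero.mpr h
      rw [div_eq_iff ht0, ← sub_eq_zero, key, h0, mul_zero]
    · intro h
      rw [div_eq_iff ht0, ← sub_eq_zero, key] at h
      exact sub_eq_zero.mp ((mul_eq_zero.mp h).resolve_left h2ne)
  -- endpoints for the intermediate value theorem
  set t₁ : ℝ := (c + μ₁ * rd) / (μ₂ + 1) + 1 with ht₁def
  have hcpos : 0 < c := by rw [hc]; positivity
  have ht₁1 : (1:ℝ) ≤ t₁ := by
    rw [ht₁def]
    nlinarith [div_nonneg (by positivity : (0:ℝ) ≤ c + μ₁ * rd) (by positivity : (0:ℝ) ≤ μ₂ + 1)]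
  have ht₁pos : (0:ℝ) < t₁ := by linarith
  have hE : (μ₂ + 1) * t₁ = c + μ₁ * rd + (μ₂ + 1) := by
    rw [ht₁def]; field_simp
  have hKt₁ : c < K t₁ := by
    simp only [hK]
    rw [lt_div_iff₀ ht₁pos]
    have hE2 : (μ₂ + 1) * t₁ * t₁ = (c + μ₁ * rd + (μ₂ + 1)) * t₁ := by rw [hE]
    nlinarith [hE2, mul_pos hμ₂ (pow_pos ht₁pos 3),
      mul_nonneg (mul_pos hμ₁ hrd).le (sub_nonneg.mpr ht₁1),
      mul_pos (add_pos hμ₂ one_pos) ht₁pos]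
  set t₀ : ℝ := μ₁ * rd / (μ₁ * rd + 2 * μ₂ + 1 + c) with ht₀def
  have ht₀pos : 0 < t₀ := by rw [ht₀def]; positivity
  have ht₀lt1 : t₀ < 1 := by
    rw [ht₀def, div_lt_one (by positivity)]; nlinarith
  have hD : t₀ * (μ₁ * rd + 2 * μ₂ + 1 + c) = μ₁ * rd := by
    rw [ht₀def]; field_simp
  have hKt₀ : K t₀ < c := by
    simp only [hK]
    rw [div_lt_iff₀ ht₀pos]
    nlinarith [hD, mul_pos ht₀pos (sub_pos.mpr ht₀lt1),
      mul_nonneg (mul_nonneg ht₀pos.le ht₀pos.le) (sub_pos.mpr ht₀lt1).le,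
      mul_pos hμ₂ (mul_pos ht₀pos (sub_pos.mpr ht₀lt1)),
      mul_pos hcpos ht₀pos]
  have ht01 : t₀ ≤ t₁ := le_of_lt (lt_of_lt_of_le ht₀lt1 ht₁1)
  have hcont : ContinuousOn K (Set.Icc t₀ t₁) := by
    apply ContinuousOn.div
    · exact (((continuous_const.mul (continuous_pow 3)).add
        (continuous_const.mul (continuous_pow 2))).sub continuous_const).continuousOn
    · exact continuousOn_id
    · intro u hu; exact ne_of_gt (lt_of_lt_of_le ht₀pos hu.1)
  obtain ⟨t, htmem, htc⟩ := intermediate_value_Icc ht01 hcont ⟨hKt₀.le, hKt₁.le⟩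
  have htpos : 0 < t := lt_of_lt_of_le ht₀pos htmem.1
  have h1t : (0:ℝ) < 1 + t := by linarith
  have hxmem : (1/(1+t)) ∈ Set.Ioo (0:ℝ) 1 := by
    constructor
    · positivity
    · rw [div_lt_one h1t]; linarith
  have hxt : (1 - 1/(1+t)) / (1/(1+t)) = t := by field_simp; ring
  refine ⟨1/(1+t), ⟨hxmem, ?_⟩, ?_⟩
  · rw [hiff _ hxmem, hxt]; exact htc
  · rintro y ⟨hy, hyeq⟩
    have hy0 : (0:ℝ) < y := hy.1
    have hy1 : (0:ℝ) < 1 - y := by have := hy.2; linarith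
    have hty : (1 - y) / y ∈ Set.Ioi (0:ℝ) := div_pos hy1 hy0
    have hKy : K ((1 - y) / y) = c := (hiff y hy).mp hyeq
    have heq : (1 - y) / y = t := by
      apply hmono.injOn hty (Set.mem_Ioi.mpr htpos)
      rw [hKy, htc]
    have h1y : (1 - y) = t * y := by
      rw [div_eq_iff (ne_of_gt hy0)] at heq; exact heq
    rw [eq_div_iff (ne_of_gt h1t)]
    linarith
end

section
/- Let μ₁ > 0, μ₂ > 0 and rd > 0, and let x₁* be the unique solution in (0, 1) of (1 − x)² = (μ₁·rd/μ₂)·x² + (x(1 − x)/μ₂)·((1 + rd)x − 1). Define x̂₁ = (rd(1 + μ₁) + 2 − √(rd²(1 + μ₁)² + 4·μ₁·rd))/(2(1 + rd)). Then 0 < x̂₁ < 1/(1 + rd) and x₁* > x̂₁. -/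
/-- For μ₁, μ₂, rd > 0 and x₁* the solution in (0, 1) of
(1 − x)² = (μ₁·rd/μ₂)x² + (x(1 − x)/μ₂)((1 + rd)x − 1), the quantity
xhat = (rd(1 + μ₁) + 2 − √(rd²(1 + μ₁)² + 4μ₁rd))/(2(1 + rd)) satisfies
0 < xhat < 1/(1 + rd) and x₁* > xhat. -/
theorem stmt7 (μ₁ μ₂ rd x : ℝ) (hμ₁ : 0 < μ₁) (hμ₂ : 0 < μ₂) (hrd : 0 < rd)
    (hx : x ∈ Set.Ioo (0 : ℝ) 1)
    (heq : (1 - x) ^ 2 =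
      (μ₁ * rd / μ₂) * x ^ 2 + (x * (1 - x) / μ₂) * ((1 + rd) * x - 1)) :
    let xhat : ℝ :=
      (rd * (1 + μ₁) + 2 - Real.sqrt (rd ^ 2 * (1 + μ₁) ^ 2 + 4 * μ₁ * rd)) /
        (2 * (1 + rd))
    0 < xhat ∧ xhat < 1 / (1 + rd) ∧ xhat < x := by
  obtain ⟨hx0, hx1⟩ := hx
  intro xhat
  set A : ℝ := rd ^ 2 * (1 + μ₁) ^ 2 + 4 * μ₁ * rd with hA
  have hA0 : 0 ≤ A := by positivity
  set s : ℝ := Real.sqrt A with hsdef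
  have hs0 : 0 ≤ s := Real.sqrt_nonneg _
  have hs2 : s ^ 2 = A := Real.sq_sqrt hA0
  have hb : (0:ℝ) < rd * (1 + μ₁) + 2 := by nlinarith
  have h1rd : (0:ℝ) < 1 + rd := by linarith
  have h1x : (0:ℝ) < 1 - x := by linarith
  -- s < b
  have hsb : s < rd * (1 + μ₁) + 2 := by
    rw [hsdef, Real.sqrt_lt' hb]
    nlinarith
  -- rd(1+μ₁) < s
  have hsl : rd * (1 + μ₁) < s := by
    rw [hsdef, show rd * (1 + μ₁) < Real.sqrt A ↔ (rd * (1 + μ₁))^2 < A from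
      Real.lt_sqrt (by positivity)]
    nlinarith
  have hxhat0 : 0 < xhat := by
    have h : 0 < rd * (1 + μ₁) + 2 - s := by linarith
    exact div_pos h (by linarith)
  refine ⟨hxhat0, ?_, ?_⟩
  · rw [show xhat = (rd * (1 + μ₁) + 2 - s) / (2 * (1 + rd)) from rfl,
      div_lt_div_iff₀ (by linarith) h1rd]
    nlinarith
  · have heq' : μ₂ * (1 - x) ^ 2 = μ₁ * rd * x ^ 2 + x * (1 - x) * ((1 + rd) * x - 1) := by
      have h := heq
      field_simp at h
      linarith
    by_contra hle
    push_neg at hle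
    have hxx : 2 * (1 + rd) * x ≤ rd * (1 + μ₁) + 2 - s := by
      have := (le_div_iff₀ (by linarith : (0:ℝ) < 2 * (1 + rd))).mp hle
      linarith
    have hsle : s ≤ rd * (1 + μ₁) + 2 - 2 * (1 + rd) * x := by linarith
    have ht2 : s ^ 2 ≤ (rd * (1 + μ₁) + 2 - 2 * (1 + rd) * x) ^ 2 :=
      pow_le_pow_left₀ hs0 hsle 2
    have hQ : 0 ≤ (1 + rd) * x ^ 2 - (rd * (1 + μ₁) + 2) * x + 1 := by
      nlinarith [ht2, hs2, h1rd]
    have h2 : 0 ≤ x * ((1 + rd) * x ^ 2 - (rd * (1 + μ₁) + 2) * x + 1) :=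
      mul_nonneg hx0.le hQ
    have h3 : 0 < μ₂ * (1 - x) ^ 2 := by positivity
    have key : μ₂ * (1 - x) ^ 2 =
        -(x * ((1 + rd) * x ^ 2 - (rd * (1 + μ₁) + 2) * x + 1)) := by
      linear_combination heq'
    linarith
end

section
/- Let μ₁ > 0, μ₂ > 0 and rd > 0, and define f₂(x) = (μ₁·rd/μ₂)·x² + (x(1 − x)/μ₂)·((1 + rd)x − 1). Then f₂(x) = −((1 + rd)x/μ₂)·(x² − b₁x + b₀) with b₁ = 1 + (1 + rd·μ₁)/(1 + rd) and b₀ = 1/(1 + rd); moreover b₁² > 4b₀ > 0, the quadratic x² − b₁x + b₀ has roots x̂₁ = (b₁ − √(b₁² − 4b₀))/2 ∈ (0, 1) and x̂₂ = (b₁ + √(b₁² − 4b₀))/2 > 1, and f₂(x) < 0 for 0 < x < x̂₁ while f₂(x) > 0 for x̂₁ < x < 1. -/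
/-- For μ₁, μ₂, rd > 0, f₂(x) = (μ₁·rd/μ₂)x² + (x(1 − x)/μ₂)((1 + rd)x − 1)
factors as −((1 + rd)x/μ₂)(x² − b₁x + b₀) with b₁ = 1 + (1 + rd·μ₁)/(1 + rd) and
b₀ = 1/(1 + rd); moreover b₁² > 4b₀ > 0, the quadratic has roots
xhat₁ = (b₁ − √(b₁² − 4b₀))/2 ∈ (0, 1) and xhat₂ = (b₁ + √(b₁² − 4b₀))/2 > 1,
and f₂ < 0 on (0, xhat₁) while f₂ > 0 on (xhat₁, 1). -/
theorem stmt8 (μ₁ μ₂ rd : ℝ) (hμ₁ : 0 < μ₁) (hμ₂ : 0 < μ₂) (hrd : 0 < rd) :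
    let f₂ : ℝ → ℝ :=
      fun x => (μ₁ * rd / μ₂) * x ^ 2 + (x * (1 - x) / μ₂) * ((1 + rd) * x - 1)
    let b₁ : ℝ := 1 + (1 + rd * μ₁) / (1 + rd)
    let b₀ : ℝ := 1 / (1 + rd)
    let xhat₁ : ℝ := (b₁ - Real.sqrt (b₁ ^ 2 - 4 * b₀)) / 2
    let xhat₂ : ℝ := (b₁ + Real.sqrt (b₁ ^ 2 - 4 * b₀)) / 2
    (∀ x : ℝ, f₂ x = -((1 + rd) * x / μ₂) * (x ^ 2 - b₁ * x + b₀)) ∧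
    b₁ ^ 2 > 4 * b₀ ∧ 0 < b₀ ∧
    xhat₁ ∈ Set.Ioo (0 : ℝ) 1 ∧ 1 < xhat₂ ∧
    xhat₁ ^ 2 - b₁ * xhat₁ + b₀ = 0 ∧ xhat₂ ^ 2 - b₁ * xhat₂ + b₀ = 0 ∧
    (∀ x : ℝ, 0 < x → x < xhat₁ → f₂ x < 0) ∧
    (∀ x : ℝ, xhat₁ < x → x < 1 → 0 < f₂ x) := by
  intro f₂ b₁ b₀ xhat₁ xhat₂
  have hs : (0:ℝ) < 1 + rd := by linarith
  have hfdef : ∀ x : ℝ,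
      f₂ x = (μ₁ * rd / μ₂) * x ^ 2 + (x * (1 - x) / μ₂) * ((1 + rd) * x - 1) :=
    fun x => rfl
  have hb1def : b₁ = 1 + (1 + rd * μ₁) / (1 + rd) := rfl
  have hb0def : b₀ = 1 / (1 + rd) := rfl
  have hx1def : xhat₁ = (b₁ - Real.sqrt (b₁ ^ 2 - 4 * b₀)) / 2 := rfl
  have hx2def : xhat₂ = (b₁ + Real.sqrt (b₁ ^ 2 - 4 * b₀)) / 2 := rfl
  clear_value xhat₁ xhat₂ b₀ b₁ f₂
  have hb₀ : 0 < b₀ := by rw [hb0def]; positivity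
  have hb₀1 : b₀ < 1 := by rw [hb0def, div_lt_one hs]; linarith
  have hb₁gt : 1 + b₀ < b₁ := by
    have h : b₁ - (1 + b₀) = (rd * μ₁) / (1 + rd) := by
      rw [hb1def, hb0def]; field_simp; ring
    have : 0 < (rd * μ₁) / (1 + rd) := by positivity
    linarith
  have hb₁pos : 0 < b₁ := by linarith
  have hD : b₁ ^ 2 > 4 * b₀ := by nlinarith
  set sq := Real.sqrt (b₁ ^ 2 - 4 * b₀) with hsqdef
  have hsq2 : sq ^ 2 = b₁ ^ 2 - 4 * b₀ := Real.sq_sqrt (by linarith)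
  have hsqpos : 0 < sq := Real.sqrt_pos.mpr (by linarith)
  have hfact : ∀ x : ℝ, f₂ x = -((1 + rd) * x / μ₂) * (x ^ 2 - b₁ * x + b₀) := by
    intro x
    rw [hfdef x, hb1def, hb0def]
    field_simp
    ring
  have h1 : sq < b₁ := by nlinarith
  have hkey : (b₁ - 2) ^ 2 < sq ^ 2 := by nlinarith
  have h2 : b₁ - 2 < sq := by nlinarith
  have h3 : 2 - b₁ < sq := by nlinarith
  have hx1pos : 0 < xhat₁ := by rw [hx1def]; linarith
  have hx1lt : xhat₁ < 1 := by rw [hx1def]; linarith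
  have hx2gt : 1 < xhat₂ := by rw [hx2def]; linarith
  have hroot1 : xhat₁ ^ 2 - b₁ * xhat₁ + b₀ = 0 := by
    rw [hx1def]; linear_combination hsq2 / 4
  have hroot2 : xhat₂ ^ 2 - b₁ * xhat₂ + b₀ = 0 := by
    rw [hx2def]; linear_combination hsq2 / 4
  have hqfact : ∀ x : ℝ, x ^ 2 - b₁ * x + b₀ = (x - xhat₁) * (x - xhat₂) := by
    intro x; rw [hx1def, hx2def]; linear_combination hsq2 / 4
  refine ⟨hfact, hD, hb₀, ⟨hx1pos, hx1lt⟩, hx2gt, hroot1, hroot2, ?_, ?_⟩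
  · intro x hx0 hx1
    rw [hfact x, hqfact x]
    have hx2' : x < xhat₂ := by rw [hx2def]; rw [hx1def] at hx1; linarith
    have hq : 0 < (x - xhat₁) * (x - xhat₂) := mul_pos_of_neg_of_neg (by linarith) (by linarith)
    have hcoef : 0 < (1 + rd) * x / μ₂ := by positivity
    have := mul_pos hcoef hq
    linarith
  · intro x hx1 hx2
    rw [hfact x, hqfact x]
    have hx2' : x < xhat₂ := by linarith
    have hq : (x - xhat₁) * (x - xhat₂) < 0 :=
      mul_neg_of_pos_of_neg (by linarith) (by linarith)
    have hx0 : 0 < x := by linarith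
    have hcoef : 0 < (1 + rd) * x / μ₂ := by positivity
    have h5 := mul_pos hcoef (neg_pos.mpr hq)
    nlinarith [h5]
end

section
/- For μ₁ > 0, μ₂ > 0 and rd > 0, let x₁*(μ₁, μ₂, rd) denote the unique solution in (0, 1) of (1 − x)² = (μ₁·rd/μ₂)·x² + (x(1 − x)/μ₂)·((1 + rd)x − 1). Then: (i) for fixed μ₂ and rd, x₁* is strictly decreasing in μ₁, i.e. if μ₁ < μ₁′ then x₁*(μ₁′, μ₂, rd) < x₁*(μ₁, μ₂, rd); (ii) for fixed μ₁ and rd, x₁* is strictly increasing in μ₂; (iii) for fixed μ₁ and μ₂, x₁* is strictly decreasing in rd. -/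
/-- The equilibrium equation E(x) for the inside-colony task allocation of the
two-task model with social interactions, with parameters μ₁, μ₂, rd. -/
def taskEq (μ₁ μ₂ rd x : ℝ) : Prop :=
  (1 - x) ^ 2 = (μ₁ * rd / μ₂) * x ^ 2 + (x * (1 - x) / μ₂) * ((1 + rd) * x - 1)

lemma taskEq_iff (μ₁ μ₂ rd x : ℝ) (hμ₂ : 0 < μ₂) (hx : x ∈ Set.Ioo (0:ℝ) 1)
    (h : taskEq μ₁ μ₂ rd x) :
    (μ₂ + x) * (1 - x) / x ^ 2 - rd * μ₁ / (1 - x) = rd := by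
  obtain ⟨hx0, hx1⟩ := hx
  have h1 : (0:ℝ) < 1 - x := by linarith
  unfold taskEq at h
  have hμ₂' : μ₂ ≠ 0 := ne_of_gt hμ₂
  field_simp at h ⊢
  ring_nf at h ⊢
  nlinarith [h]

lemma Hmono (μ₂ c : ℝ) (hμ₂ : 0 < μ₂) (hc : 0 < c) {a b : ℝ}
    (ha : a ∈ Set.Ioo (0:ℝ) 1) (hb : b ∈ Set.Ioo (0:ℝ) 1) (hab : a ≤ b) :
    (μ₂ + b) * (1 - b) / b ^ 2 - c / (1 - b) ≤
      (μ₂ + a) * (1 - a) / a ^ 2 - c / (1 - a) := by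
  obtain ⟨ha0, ha1⟩ := ha
  obtain ⟨hb0, hb1⟩ := hb
  have h1a : (0:ℝ) < 1 - a := by linarith
  have h1b : (0:ℝ) < 1 - b := by linarith
  have key1 : (μ₂ + b) * (1 - b) / b ^ 2 ≤ (μ₂ + a) * (1 - a) / a ^ 2 := by
    rw [div_le_div_iff₀ (by positivity) (by positivity)]
    nlinarith [mul_nonneg (mul_nonneg hμ₂.le (sub_nonneg.2 hab))
        (by nlinarith : (0:ℝ) ≤ a + b - a * b),
      mul_nonneg (mul_pos ha0 hb0).le (sub_nonneg.2 hab)]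
  have key2 : c / (1 - a) ≤ c / (1 - b) := by
    apply div_le_div_of_nonneg_left hc.le h1b
    linarith
  linarith

/-- The unique root x₁* ∈ (0, 1) of the equilibrium equation is (i) strictly
decreasing in μ₁, (ii) strictly increasing in μ₂, (iii) strictly decreasing
in rd. -/
theorem stmt9 (μ₁ μ₂ rd : ℝ) (hμ₁ : 0 < μ₁) (hμ₂ : 0 < μ₂) (hrd : 0 < rd) :
    (∀ μ₁' x x' : ℝ, μ₁ < μ₁' →
      x ∈ Set.Ioo (0 : ℝ) 1 → taskEq μ₁ μ₂ rd x →
      x' ∈ Set.Ioo (0 : ℝ) 1 → taskEq μ₁' μ₂ rd x' → x' < x) ∧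
    (∀ μ₂' x x' : ℝ, μ₂ < μ₂' →
      x ∈ Set.Ioo (0 : ℝ) 1 → taskEq μ₁ μ₂ rd x →
      x' ∈ Set.Ioo (0 : ℝ) 1 → taskEq μ₁ μ₂' rd x' → x < x') ∧
    (∀ rd' x x' : ℝ, rd < rd' →
      x ∈ Set.Ioo (0 : ℝ) 1 → taskEq μ₁ μ₂ rd x →
      x' ∈ Set.Ioo (0 : ℝ) 1 → taskEq μ₁ μ₂ rd' x' → x' < x) := by
  refine ⟨?_, ?_, ?_⟩
  · intro μ₁' x x' hlt hx hE hx' hE'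
    have e := taskEq_iff μ₁ μ₂ rd x hμ₂ hx hE
    have e' := taskEq_iff μ₁' μ₂ rd x' hμ₂ hx' hE'
    by_contra hcon
    push_neg at hcon
    have mono := Hmono μ₂ (rd * μ₁') hμ₂ (mul_pos hrd (by linarith)) hx hx' hcon
    have h1x : (0:ℝ) < 1 - x := by linarith [hx.2]
    have hdiv : rd * μ₁ / (1 - x) < rd * μ₁' / (1 - x) :=
      (div_lt_div_iff_of_pos_right h1x).2 (by nlinarith)
    linarith
  · intro μ₂' x x' hlt hx hE hx' hE'
    have e := taskEq_iff μ₁ μ₂ rd x hμ₂ hx hE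
    have e' := taskEq_iff μ₁ μ₂' rd x' (by linarith) hx' hE'
    by_contra hcon
    push_neg at hcon
    have mono := Hmono μ₂' (rd * μ₁) (by linarith) (mul_pos hrd (by linarith)) hx' hx hcon
    have h1x : (0:ℝ) < 1 - x := by linarith [hx.2]
    have hx2 : (0:ℝ) < x ^ 2 := pow_pos hx.1 2
    have hdiv : (μ₂ + x) * (1 - x) / x ^ 2 < (μ₂' + x) * (1 - x) / x ^ 2 :=
      (div_lt_div_iff_of_pos_right hx2).2 (by nlinarith)
    linarith
  · intro rd' x x' hlt hx hE hx' hE'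
    have e := taskEq_iff μ₁ μ₂ rd x hμ₂ hx hE
    have e' := taskEq_iff μ₁ μ₂ rd' x' hμ₂ hx' hE'
    by_contra hcon
    push_neg at hcon
    have mono := Hmono μ₂ (rd' * μ₁) hμ₂ (mul_pos (by linarith) hμ₁) hx hx' hcon
    have h1x : (0:ℝ) < 1 - x := by linarith [hx.2]
    have hdiv : rd * μ₁ / (1 - x) < rd' * μ₁ / (1 - x) :=
      (div_lt_div_iff_of_pos_right h1x).2 (by nlinarith)
    linarith
end

section
/- Let μ₁ > 0, μ₂ > 0 and rd > 0, let x₁^R be the unique root in (0, 1) of (1 − x)² = (μ₁·rd/μ₂)·x² + (x(1 − x)/μ₂)·((1 + rd)x − 1), and set x₁^{NS} = 1/(1 + √(μ₁·rd/μ₂)) and x₁^{SI} = 1/(1 + rd). Then: (i) if μ₁/μ₂ > rd, then x₁^{NS} < x₁^R < x₁^{SI}; (ii) if μ₁/μ₂ < rd, then x₁^{SI} < x₁^R < x₁^{NS}. -/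
set_option maxHeartbeats 1000000


/-- For μ₁, μ₂, rd > 0 with x₁^R the unique root in (0, 1) of
(1 − x)² = (μ₁·rd/μ₂)x² + (x(1 − x)/μ₂)((1 + rd)x − 1),
x₁^NS = 1/(1 + √(μ₁·rd/μ₂)) and x₁^SI = 1/(1 + rd):
(i) if μ₁/μ₂ > rd then x₁^NS < x₁^R < x₁^SI;
(ii) if μ₁/μ₂ < rd then x₁^SI < x₁^R < x₁^NS. -/
theorem stmt11 (μ₁ μ₂ rd xR : ℝ) (hμ₁ : 0 < μ₁) (hμ₂ : 0 < μ₂) (hrd : 0 < rd)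
    (hxR : xR ∈ Set.Ioo (0 : ℝ) 1)
    (heq : (1 - xR) ^ 2 =
      (μ₁ * rd / μ₂) * xR ^ 2 + (xR * (1 - xR) / μ₂) * ((1 + rd) * xR - 1)) :
    let xNS : ℝ := 1 / (1 + Real.sqrt (μ₁ * rd / μ₂))
    let xSI : ℝ := 1 / (1 + rd)
    (μ₁ / μ₂ > rd → xNS < xR ∧ xR < xSI) ∧
    (μ₁ / μ₂ < rd → xSI < xR ∧ xR < xNS) := by
  obtain ⟨hx0, hx1⟩ := hxR
  intro xNS xSI
  have ha : 0 < μ₁ * rd / μ₂ := by positivity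
  set s : ℝ := Real.sqrt (μ₁ * rd / μ₂) with hs_def
  have hs : 0 < s := Real.sqrt_pos.mpr ha
  have hs2 : s ^ 2 = μ₁ * rd / μ₂ := Real.sq_sqrt ha.le
  have hsa : μ₂ * s ^ 2 = μ₁ * rd := by
    rw [hs2]; field_simp
  have heq' : μ₂ * (1 - xR) ^ 2
      = μ₂ * s ^ 2 * xR ^ 2 + xR * (1 - xR) * ((1 + rd) * xR - 1) := by
    rw [hsa]; field_simp at heq; linarith
  have hxNS : xNS = 1 / (1 + s) := rfl
  have hxSI : xSI = 1 / (1 + rd) := rfl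
  clear_value xNS xSI
  clear_value s
  constructor
  · intro hgt
    have hμ : rd * μ₂ < μ₁ := by rwa [gt_iff_lt, lt_div_iff₀ hμ₂] at hgt
    have hrs : rd < s := by
      have h2 : rd ^ 2 < μ₁ * rd / μ₂ := by
        rw [lt_div_iff₀ hμ₂]; nlinarith
      nlinarith [hs2, hs, sq_nonneg (s - rd), sq_nonneg (s + rd)]
    constructor
    · by_contra h
      push_neg at h
      have hx : xR * (1 + s) ≤ 1 := by
        rw [hxNS, le_div_iff₀ (by linarith)] at h; linarith
      have f1 : 0 ≤ μ₂ * ((1 - xR - s * xR) * (1 - xR + s * xR)) :=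
        mul_nonneg hμ₂.le (mul_nonneg (by nlinarith) (by nlinarith))
      have f2 : 0 < xR * (1 - xR) * (1 - (1 + rd) * xR) :=
        mul_pos (mul_pos hx0 (by linarith)) (by nlinarith)
      nlinarith [heq', f1, f2]
    · by_contra h
      push_neg at h
      have hx : 1 ≤ xR * (1 + rd) := by
        rw [hxSI, div_le_iff₀ (by linarith)] at h; linarith
      have f1 : 0 < μ₂ * ((s * xR - (1 - xR)) * (s * xR + (1 - xR))) :=
        mul_pos hμ₂ (mul_pos (by nlinarith) (by nlinarith))
      have f2 : 0 ≤ xR * (1 - xR) * ((1 + rd) * xR - 1) :=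
        mul_nonneg (mul_nonneg hx0.le (by linarith)) (by nlinarith)
      nlinarith [heq', f1, f2]
  · intro hlt
    have hμ : μ₁ < rd * μ₂ := by rwa [div_lt_iff₀ hμ₂] at hlt
    have hrs : s < rd := by
      have h2 : μ₁ * rd / μ₂ < rd ^ 2 := by
        rw [div_lt_iff₀ hμ₂]; nlinarith
      nlinarith [hs2, hs, sq_nonneg (s - rd), sq_nonneg (s + rd)]
    constructor
    · by_contra h
      push_neg at h
      have hx : xR * (1 + rd) ≤ 1 := by
        rw [hxSI, le_div_iff₀ (by linarith)] at h; linarith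
      have f1 : 0 < μ₂ * ((1 - xR - s * xR) * (1 - xR + s * xR)) :=
        mul_pos hμ₂ (mul_pos (by nlinarith) (by nlinarith))
      have f2 : 0 ≤ xR * (1 - xR) * (1 - (1 + rd) * xR) :=
        mul_nonneg (mul_nonneg hx0.le (by linarith)) (by nlinarith)
      nlinarith [heq', f1, f2]
    · by_contra h
      push_neg at h
      have hx : 1 ≤ xR * (1 + s) := by
        rw [hxNS, div_le_iff₀ (by linarith)] at h; linarith
      have f1 : 0 ≤ μ₂ * ((s * xR - (1 - xR)) * (s * xR + (1 - xR))) :=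
        mul_nonneg hμ₂.le (mul_nonneg (by nlinarith) (by nlinarith))
      have f2 : 0 < xR * (1 - xR) * ((1 + rd) * xR - 1) :=
        mul_pos (mul_pos hx0 (by linarith)) (by nlinarith)
      nlinarith [heq', f1, f2]
end

section
/- Let β > 0, μ₂ > 0 and rd > 0. Then the equation (1 − x)² = (β·rd/μ₂)·x² + (x(1 − x)/μ₂)·((1 + rd)x − 1 + β − μ₂·rd) has exactly one solution x₁* in the open interval (0, 1). -/
/-- For β, μ₂, rd > 0, the equation
(1 − x)² = (β·rd/μ₂)x² + (x(1 − x)/μ₂)((1 + rd)x − 1 + β − μ₂·rd)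
has exactly one solution in (0, 1). -/
theorem stmt13 (β μ₂ rd : ℝ) (hβ : 0 < β) (hμ₂ : 0 < μ₂) (hrd : 0 < rd) :
    ∃! x : ℝ, x ∈ Set.Ioo (0 : ℝ) 1 ∧
      (1 - x) ^ 2 =
        (β * rd / μ₂) * x ^ 2 +
          (x * (1 - x) / μ₂) * ((1 + rd) * x - 1 + β - μ₂ * rd) := by
  have hμ' : μ₂ ≠ 0 := ne_of_gt hμ₂
  set a : ℝ := (μ₂ + β) * (1 - rd) - rd - 2 with ha
  set b : ℝ := μ₂ * (rd - 2) + 1 - β with hb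
  set F : ℝ → ℝ := fun t => (1 + rd) * t ^ 3 + a * t ^ 2 + b * t + μ₂ with hF
  have hr1 : (0:ℝ) < 1 + rd := by linarith
  have hr1' : (1 + rd : ℝ) ≠ 0 := ne_of_gt hr1
  -- the original equation is equivalent to F x = 0
  have hequiv : ∀ x : ℝ,
      ((1 - x) ^ 2 =
        (β * rd / μ₂) * x ^ 2 +
          (x * (1 - x) / μ₂) * ((1 + rd) * x - 1 + β - μ₂ * rd)) ↔ F x = 0 := by
    intro x
    rw [hF, ha, hb]
    constructor
    · intro h
      field_simp at h
      simp only []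
      linear_combination h
    · intro h
      field_simp
      linear_combination (h : (1 + rd) * x ^ 3 + ((μ₂ + β) * (1 - rd) - rd - 2) * x ^ 2 + (μ₂ * (rd - 2) + 1 - β) * x + μ₂ = 0)
  -- existence via IVT
  have hF0 : F 0 = μ₂ := by simp [hF]
  have hF1 : F 1 = -(β * rd) := by simp only [hF, ha, hb]; ring
  have hcont : ContinuousOn F (Set.Icc (0:ℝ) 1) := by
    apply Continuous.continuousOn
    simp only [hF]
    continuity
  have hsub := intermediate_value_Ioo' (le_of_lt one_pos) hcont
  have h0mem : (0:ℝ) ∈ Set.Ioo (F 1) (F 0) := by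
    rw [hF0, hF1]
    constructor <;> nlinarith
  obtain ⟨x₀, hx₀mem, hx₀F⟩ := hsub h0mem
  refine ⟨x₀, ⟨hx₀mem, (hequiv x₀).mpr hx₀F⟩, ?_⟩
  -- uniqueness
  rintro y ⟨hymem, hyeq⟩
  by_contra hne
  have hFy : F y = 0 := (hequiv y).mp hyeq
  have hFx : F x₀ = 0 := hx₀F
  obtain ⟨hy0, hy1⟩ := hymem
  obtain ⟨hx0, hx1⟩ := hx₀mem
  have hxy : y - x₀ ≠ 0 := sub_ne_zero.mpr hne
  simp only [hF] at hFx hFy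
  have E2 : (1 + rd) * x₀ * y * (x₀ + y) + a * (x₀ * y) - μ₂ = 0 := by
    have h : (y - x₀) * ((1 + rd) * x₀ * y * (x₀ + y) + a * (x₀ * y) - μ₂) = 0 := by
      linear_combination x₀ * hFy - y * hFx
    exact (mul_eq_zero.mp h).resolve_left hxy
  have E1 : (1 + rd) * (x₀ ^ 2 + x₀ * y + y ^ 2) + a * (x₀ + y) + b = 0 := by
    have h : (y - x₀) * ((1 + rd) * (x₀ ^ 2 + x₀ * y + y ^ 2) + a * (x₀ + y) + b) = 0 := by
      linear_combination hFy - hFx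
    exact (mul_eq_zero.mp h).resolve_left hxy
  set z : ℝ := (-a - (1 + rd) * (x₀ + y)) / (1 + rd) with hz
  have hz1 : (1 + rd) * z = -a - (1 + rd) * (x₀ + y) := by
    rw [hz]; field_simp
  have hprod : (1 + rd) * (x₀ * y * z) = -μ₂ := by
    linear_combination x₀ * y * hz1 - E2
  have hzneg : z < 0 := by
    by_contra hge
    push_neg at hge
    have h1 : 0 ≤ (1 + rd) * (x₀ * y * z) :=
      mul_nonneg hr1.le (mul_nonneg (mul_pos hx0 hy0).le hge)
    linarith [hprod ▸ h1]
  have hone : (1 + rd) * ((1 - x₀) * (1 - y) * (1 - z)) = -(β * rd) := by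
    linear_combination (-(1 - x₀) * (1 - y)) * hz1 - E1 + E2 + ha + hb
  nlinarith [mul_pos (mul_pos (mul_pos hr1 (by linarith : (0:ℝ) < 1 - x₀))
      (by linarith : (0:ℝ) < 1 - y)) (by linarith : (0:ℝ) < 1 - z),
    mul_pos hβ hrd, hone]
end

section
/- Let β > 0, μ₂ > 0 and rd > 0 with β < 1 + μ₂·rd, and let x₁* be the unique solution in (0, 1) of (1 − x)² = (β·rd/μ₂)·x² + (x(1 − x)/μ₂)·((1 + rd)x − 1 + β − μ₂·rd). Define a₁ = 1 + (rd(μ₂ + β) + 1 − β)/(1 + rd) and a₀ = (1 + μ₂·rd − β)/(1 + rd), and set x̂₁ = (a₁ − √(a₁² − 4a₀))/2. Then x̂₁ ∈ (0, 1) and x₁* > x̂₁. -/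
lemma stmt14_aux (β μ₂ rd x a₁ a₀ : ℝ) (hβ : 0 < β) (hμ₂ : 0 < μ₂) (hrd : 0 < rd)
    (hsmall : β < 1 + μ₂ * rd)
    (hx : x ∈ Set.Ioo (0 : ℝ) 1)
    (heq : (1 - x) ^ 2 =
      (β * rd / μ₂) * x ^ 2 +
        (x * (1 - x) / μ₂) * ((1 + rd) * x - 1 + β - μ₂ * rd))
    (ha₁ : a₁ = 1 + (rd * (μ₂ + β) + 1 - β) / (1 + rd))
    (ha₀ : a₀ = (1 + μ₂ * rd - β) / (1 + rd)) :
    (a₁ - Real.sqrt (a₁ ^ 2 - 4 * a₀)) / 2 ∈ Set.Ioo (0 : ℝ) 1 ∧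
      (a₁ - Real.sqrt (a₁ ^ 2 - 4 * a₀)) / 2 < x := by
  obtain ⟨hx0, hx1⟩ := hx
  have hrd1 : (0:ℝ) < 1 + rd := by linarith
  have ha0pos : 0 < a₀ := by
    rw [ha₀]; exact div_pos (by linarith) hrd1
  have ha1pos : 1 < a₁ := by
    rw [ha₁]
    have hnum : 0 < rd * (μ₂ + β) + 1 - β := by nlinarith
    have := div_pos hnum hrd1
    linarith
  -- clear μ₂ from heq
  have h2 : μ₂ * (1 - x) ^ 2 =
      β * rd * x ^ 2 + x * (1 - x) * ((1 + rd) * x - 1 + β - μ₂ * rd) := by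
    field_simp at heq
    linear_combination heq
  -- key factorization : (1+rd) x Q(x) = -(β rd x² + x(1-x)(...)) (pure identity)
  have hkey : (1 + rd) * x * (x ^ 2 - a₁ * x + a₀) = -(μ₂ * (1 - x) ^ 2) := by
    have hid : (1 + rd) * ((1 + rd) * x * (x ^ 2 - a₁ * x + a₀)) =
        (1 + rd) * (-(β * rd * x ^ 2 + x * (1 - x) * ((1 + rd) * x - 1 + β - μ₂ * rd))) := by
      rw [ha₁, ha₀]; field_simp; ring
    have h3 := mul_left_cancel₀ (ne_of_gt hrd1) hid
    linarith
  have h1x : 0 < (1 - x) ^ 2 := pow_pos (by linarith) 2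
  have hpos : 0 < (1 + rd) * x := mul_pos hrd1 hx0
  have hQ : x ^ 2 - a₁ * x + a₀ < 0 := by
    by_contra h
    push_neg at h
    nlinarith [mul_nonneg hpos.le h, mul_pos hμ₂ h1x]
  have hD : 0 < a₁ ^ 2 - 4 * a₀ := by nlinarith [sq_nonneg (2 * x - a₁)]
  set s := Real.sqrt (a₁ ^ 2 - 4 * a₀) with hs
  have hs2 : s ^ 2 = a₁ ^ 2 - 4 * a₀ := Real.sq_sqrt hD.le
  have hs0 : 0 ≤ s := Real.sqrt_nonneg _
  have hsa : s < a₁ := by nlinarith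
  have hlt : a₁ - 2 * x < s := by
    by_contra h
    push_neg at h
    have h1 : 0 ≤ a₁ - 2 * x := le_trans hs0 h
    have h4 : s * s ≤ (a₁ - 2 * x) * (a₁ - 2 * x) := mul_self_le_mul_self hs0 h
    nlinarith
  have hxhat : (a₁ - s) / 2 < x := by linarith
  exact ⟨⟨by linarith, by linarith⟩, hxhat⟩

/-- For β, μ₂, rd > 0 with β < 1 + μ₂·rd, and x₁* the unique root in (0, 1) of
(1 − x)² = (β·rd/μ₂)x² + (x(1 − x)/μ₂)((1 + rd)x − 1 + β − μ₂·rd): with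
a₁ = 1 + (rd(μ₂ + β) + 1 − β)/(1 + rd), a₀ = (1 + μ₂·rd − β)/(1 + rd) and
xhat₁ = (a₁ − √(a₁² − 4a₀))/2, one has xhat₁ ∈ (0, 1) and x₁* > xhat₁. -/
theorem stmt14 (β μ₂ rd x : ℝ) (hβ : 0 < β) (hμ₂ : 0 < μ₂) (hrd : 0 < rd)
    (hsmall : β < 1 + μ₂ * rd)
    (hx : x ∈ Set.Ioo (0 : ℝ) 1)
    (heq : (1 - x) ^ 2 =
      (β * rd / μ₂) * x ^ 2 +
        (x * (1 - x) / μ₂) * ((1 + rd) * x - 1 + β - μ₂ * rd)) :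
    let a₁ : ℝ := 1 + (rd * (μ₂ + β) + 1 - β) / (1 + rd)
    let a₀ : ℝ := (1 + μ₂ * rd - β) / (1 + rd)
    let xhat₁ : ℝ := (a₁ - Real.sqrt (a₁ ^ 2 - 4 * a₀)) / 2
    xhat₁ ∈ Set.Ioo (0 : ℝ) 1 ∧ xhat₁ < x := by
  intro a₁ a₀ xhat₁
  exact stmt14_aux β μ₂ rd x a₁ a₀ hβ hμ₂ hrd hsmall hx heq rfl rfl
end

section
/- For β > 0, μ₂ > 0 and rd > 0, let x₁*(β, μ₂, rd) denote the unique solution in (0, 1) of (1 − x)² = (β·rd/μ₂)·x² + (x(1 − x)/μ₂)·((1 + rd)x − 1 + β − μ₂·rd). Then: (i) for fixed μ₂ and rd, x₁* is strictly decreasing in β, i.e. if β < β′ then x₁*(β′, μ₂, rd) < x₁*(β, μ₂, rd); (ii) if μ₂ < μ₂′ and β > 1 + rd·μ₂′, then x₁*(β, μ₂, rd) < x₁*(β, μ₂′, rd). -/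
/-- The equilibrium equation A(x) for the inside-colony task allocation of the
two-task model with temporal polyethism and social interactions, with
parameters β (maturation rate), μ₂ (outside mortality) and rd (relative
demand). -/
def ageTaskEq (β μ₂ rd x : ℝ) : Prop :=
  (1 - x) ^ 2 =
    (β * rd / μ₂) * x ^ 2 + (x * (1 - x) / μ₂) * ((1 + rd) * x - 1 + β - μ₂ * rd)

/-- Positivity of the key quantity Q in the β-monotonicity argument. -/
lemma Qpos (x y m r : ℝ) (hx : 0 < x) (hx1 : x < 1) (hy : 0 < y) (hy1 : y < 1)
    (hr : 0 < r) (hm : 0 < m)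
    (hBx : 0 < m * (1 - x + r * x) + x - (1 + r) * x ^ 2)
    (hBy : 0 < m * (1 - y + r * y) + y - (1 + r) * y ^ 2) :
    0 < m * (1 - x + r * x) * (1 - y + r * y) +
      x * y * (1 + 2 * r - (1 + r) * (x + y) + (1 - r ^ 2) * (x * y)) := by
  have hAx : 0 < 1 - x + r * x := by nlinarith
  have hAy : 0 < 1 - y + r * y := by nlinarith
  rcases le_or_gt 1 ((1 + r) * x) with hc | hc
  · -- Q = A(y)·B(x) + x(1-y)((1+r)x - 1) + (1+r)·x·y·(1-y)·A(x)
    nlinarith [mul_pos hAy hBx, mul_nonneg (mul_nonneg hx.le (by linarith : (0:ℝ) ≤ 1 - y)) (by linarith : (0:ℝ) ≤ (1 + r) * x - 1),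
      mul_pos (mul_pos (mul_pos (mul_pos (by linarith : (0:ℝ) < 1 + r) hx) hy) (by linarith : (0:ℝ) < 1 - y)) hAx]
  rcases le_or_gt 1 ((1 + r) * y) with hc' | hc'
  · nlinarith [mul_pos hAx hBy, mul_nonneg (mul_nonneg hy.le (by linarith : (0:ℝ) ≤ 1 - x)) (by linarith : (0:ℝ) ≤ (1 + r) * y - 1),
      mul_pos (mul_pos (mul_pos (mul_pos (by linarith : (0:ℝ) < 1 + r) hx) hy) (by linarith : (0:ℝ) < 1 - x)) hAy]
  · -- both (1+r)x < 1 and (1+r)y < 1 : f > 0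
    have hu : r < (1 + r) * (1 - x) := by nlinarith
    have hf : 0 < 1 + 2 * r - (1 + r) * (x + y) + (1 - r ^ 2) * (x * y) := by
      -- f = r(1+r)(1-x) + r(1+r)(1-y) - r² + (1-r²)(1-x)(1-y) rewritten; here use
      -- f > r² - r² + (1-y)(1+r)A(x) form
      nlinarith [mul_pos (mul_pos hr (by linarith : (0:ℝ) < 1 + r)) (by linarith : (0:ℝ) < 1 - x),
        mul_pos (mul_pos (by linarith : (0:ℝ) < 1 - y) (by linarith : (0:ℝ) < 1 + r)) hAx,
        mul_pos hr hr]
    positivity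

/-- Positivity of the key quantity Q₂ in the μ₂-monotonicity argument. -/
lemma Q2pos (x y b r : ℝ) (hx : 0 < x) (hx1 : x < 1) (hy : 0 < y) (hy1 : y < 1)
    (hr : 0 < r) (hb : 1 < b) :
    0 < b * (1 - x + r * x) * (1 - y + r * y) -
      (1 - x) * (1 - y) * ((1 - x) * (1 - y) - r * (x + y + r * (x * y))) := by
  have hAx : (1 : ℝ) - x < 1 - x + r * x := by nlinarith
  have hAy : (1 : ℝ) - y < 1 - y + r * y := by nlinarith
  have hu : (0 : ℝ) < 1 - x := by linarith
  have hv : (0 : ℝ) < 1 - y := by linarith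
  have huv1 : (1 - x) * (1 - y) < 1 := by nlinarith
  have hAA : (1 - x) * (1 - y) < (1 - x + r * x) * (1 - y + r * y) := by nlinarith
  rcases le_or_gt ((1 - x) * (1 - y) - r * (x + y + r * (x * y))) 0 with hE | hE
  · nlinarith [mul_pos (mul_pos (by linarith : (0:ℝ) < b) (by linarith : (0:ℝ) < 1 - x + r * x)) (by linarith : (0:ℝ) < 1 - y + r * y),
      mul_nonneg (mul_nonneg hu.le hv.le) (by linarith : (0:ℝ) ≤ -((1 - x) * (1 - y) - r * (x + y + r * (x * y))))]
  · -- uv·E < uv·uv < uv < AxAy < b·AxAy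
    have h1 : (1 - x) * (1 - y) * ((1 - x) * (1 - y) - r * (x + y + r * (x * y)))
        < (1 - x) * (1 - y) := by nlinarith [mul_pos hu hv]
    have h2 : (1 - x) * (1 - y) < b * (1 - x + r * x) * (1 - y + r * y) := by
      nlinarith [mul_pos (by linarith : (0:ℝ) < 1 - x + r * x) (by linarith : (0:ℝ) < 1 - y + r * y)]
    linarith

set_option maxHeartbeats 1600000 in
/-- The unique root x₁* ∈ (0, 1) of the polyethism equilibrium equation is
(i) strictly decreasing in β; (ii) if μ₂ < μ₂′ and β > 1 + rd·μ₂′, then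
x₁*(β, μ₂, rd) < x₁*(β, μ₂′, rd). -/
theorem stmt15 (β μ₂ rd : ℝ) (hβ : 0 < β) (hμ₂ : 0 < μ₂) (hrd : 0 < rd) :
    (∀ β' x x' : ℝ, β < β' →
      x ∈ Set.Ioo (0 : ℝ) 1 → ageTaskEq β μ₂ rd x →
      x' ∈ Set.Ioo (0 : ℝ) 1 → ageTaskEq β' μ₂ rd x' → x' < x) ∧
    (∀ μ₂' x x' : ℝ, μ₂ < μ₂' → β > 1 + rd * μ₂' →
      x ∈ Set.Ioo (0 : ℝ) 1 → ageTaskEq β μ₂ rd x →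
      x' ∈ Set.Ioo (0 : ℝ) 1 → ageTaskEq β μ₂' rd x' → x < x') := by
  constructor
  · rintro β' x y hββ' ⟨hx0, hx1⟩ hx ⟨hy0, hy1⟩ hy
    have hβ' : 0 < β' := lt_trans hβ hββ'
    rw [ageTaskEq] at hx hy
    have hμ₂' : μ₂ ≠ 0 := ne_of_gt hμ₂
    field_simp at hx hy
    -- polynomial forms: β·x·A(x) = (1-x)·B(x)
    have hEx : β * (x * (1 - x + rd * x)) =
        (1 - x) * (μ₂ * (1 - x + rd * x) + x - (1 + rd) * x ^ 2) := by
      linear_combination -hx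
    have hEy : β' * (y * (1 - y + rd * y)) =
        (1 - y) * (μ₂ * (1 - y + rd * y) + y - (1 + rd) * y ^ 2) := by
      linear_combination -hy
    clear hx hy
    have hAx : 0 < 1 - x + rd * x := by nlinarith
    have hAy : 0 < 1 - y + rd * y := by nlinarith
    have hBx : 0 < μ₂ * (1 - x + rd * x) + x - (1 + rd) * x ^ 2 := by
      nlinarith [mul_pos hβ (mul_pos hx0 hAx)]
    have hBy : 0 < μ₂ * (1 - y + rd * y) + y - (1 + rd) * y ^ 2 := by
      nlinarith [mul_pos hβ' (mul_pos hy0 hAy)]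
    have hQ := Qpos x y μ₂ rd hx0 hx1 hy0 hy1 hrd hμ₂ hBx hBy
    have hkey : (β' - β) * ((x * (1 - x + rd * x)) * (y * (1 - y + rd * y))) =
        (x - y) * (μ₂ * (1 - x + rd * x) * (1 - y + rd * y) +
          x * y * (1 + 2 * rd - (1 + rd) * (x + y) + (1 - rd ^ 2) * (x * y))) := by
      linear_combination (x * (1 - x + rd * x)) * hEy - (y * (1 - y + rd * y)) * hEx
    have hL : 0 < (β' - β) * ((x * (1 - x + rd * x)) * (y * (1 - y + rd * y))) := by
      apply mul_pos (by linarith)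
      exact mul_pos (mul_pos hx0 hAx) (mul_pos hy0 hAy)
    rw [hkey] at hL
    nlinarith [hQ, hL]
  · rintro μ₂' x y hμμ' hbig ⟨hx0, hx1⟩ hx ⟨hy0, hy1⟩ hy
    have hμ₂'' : 0 < μ₂' := lt_trans hμ₂ hμμ'
    rw [ageTaskEq] at hx hy
    have hμn : μ₂ ≠ 0 := ne_of_gt hμ₂
    have hμn' : μ₂' ≠ 0 := ne_of_gt hμ₂''
    field_simp at hx hy
    have hEx : μ₂ * ((1 - x) * (1 - x + rd * x)) =
        x * (β * (1 - x + rd * x) - (1 - x) * (1 - (1 + rd) * x)) := by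
      linear_combination hx
    have hEy : μ₂' * ((1 - y) * (1 - y + rd * y)) =
        y * (β * (1 - y + rd * y) - (1 - y) * (1 - (1 + rd) * y)) := by
      linear_combination hy
    clear hx hy
    have hAx : 0 < 1 - x + rd * x := by nlinarith
    have hAy : 0 < 1 - y + rd * y := by nlinarith
    have hb1 : 1 < β := by nlinarith [mul_pos hrd hμ₂''] 
    have hQ2 := Q2pos x y β rd hx0 hx1 hy0 hy1 hrd hb1
    have hkey : (μ₂' - μ₂) * (((1 - x) * (1 - x + rd * x)) * ((1 - y) * (1 - y + rd * y))) =
        (y - x) * (β * (1 - x + rd * x) * (1 - y + rd * y) -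
          (1 - x) * (1 - y) * ((1 - x) * (1 - y) - rd * (x + y + rd * (x * y)))) := by
      linear_combination ((1 - x) * (1 - x + rd * x)) * hEy - ((1 - y) * (1 - y + rd * y)) * hEx
    have hL : 0 < (μ₂' - μ₂) * (((1 - x) * (1 - x + rd * x)) * ((1 - y) * (1 - y + rd * y))) := by
      apply mul_pos (by linarith)
      exact mul_pos (mul_pos (by linarith) hAx) (mul_pos (by linarith) hAy)
    rw [hkey] at hL
    nlinarith [hQ2, hL]
end

section
/- Let β > 0, μ₂ > 0 and rd > 0. Then x₁ = μ₂/(β + μ₂) is the unique solution in the open interval (0, 1) of the equation (1 − x)² = (β·rd/μ₂)·x² + (x(1 − x)/μ₂)·(β − μ₂·rd). -/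
/-- For β, μ₂, rd > 0, x₁ = μ₂/(β + μ₂) is the unique solution in (0, 1) of
(1 − x)² = (β·rd/μ₂)x² + (x(1 − x)/μ₂)(β − μ₂·rd). -/
theorem stmt17 (β μ₂ rd : ℝ) (hβ : 0 < β) (hμ₂ : 0 < μ₂) (hrd : 0 < rd) :
    (μ₂ / (β + μ₂) ∈ Set.Ioo (0 : ℝ) 1 ∧
      (1 - μ₂ / (β + μ₂)) ^ 2 =
        (β * rd / μ₂) * (μ₂ / (β + μ₂)) ^ 2 +
          (μ₂ / (β + μ₂) * (1 - μ₂ / (β + μ₂)) / μ₂) * (β - μ₂ * rd)) ∧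
    ∀ x : ℝ, x ∈ Set.Ioo (0 : ℝ) 1 →
      (1 - x) ^ 2 =
        (β * rd / μ₂) * x ^ 2 + (x * (1 - x) / μ₂) * (β - μ₂ * rd) →
      x = μ₂ / (β + μ₂) := by
  have hsum : 0 < β + μ₂ := by linarith
  refine ⟨⟨⟨by positivity, by rw [div_lt_one hsum]; linarith⟩, ?_⟩, ?_⟩
  · field_simp
    ring
  · rintro x ⟨hx0, hx1⟩ heq
    have hμ := hμ₂.ne'
    have key : ((1 - x) + rd * x) * (μ₂ * (1 - x) - β * x) = 0 := by
      field_simp at heq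
      nlinarith [heq]
    have hpos : 0 < (1 - x) + rd * x := by nlinarith
    have h2 : μ₂ * (1 - x) - β * x = 0 := by
      rcases mul_eq_zero.mp key with h | h
      · linarith
      · exact h
    field_simp
    linarith
end

section
/- Let r > 0, b > 0, s > 1 and 0 < μ₁ ≤ μ_m with f(N_c(μ_m), μ_m) < 0, where f(N, μ) = μ(b + N^s) − r N^{s−1} and N_c(μ) = r(s−1)/(μs); denote by N₁^− < N₁^+ the two positive roots of f(·, μ₁) and by N_m^− < N_m^+ the two positive roots of f(·, μ_m). Suppose N : [0, ∞) → (0, ∞) is differentiable and satisfies the differential inequalities N(t)·(r N(t)^{s−1}/(b + N(t)^s) − μ_m) ≤ N′(t) ≤ N(t)·(r N(t)^{s−1}/(b + N(t)^s) − μ₁) for all t ≥ 0. Then: (i) if N(0) > N_m^−, then N_m^+ ≤ liminf_{t→∞} N(t) ≤ limsup_{t→∞} N(t) ≤ N₁^+; (ii) if N(0) < N₁^−, then liminf_{t→∞} N(t) = 0. -/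
open Filter Set Topology


private lemma aux_inv_lower (g g' : ℝ → ℝ)
    (hg : ∀ t : ℝ, 0 ≤ t → HasDerivAt g (g' t) t)
    {c t₀ : ℝ} (ht₀ : 0 ≤ t₀) (h0 : c < g t₀)
    (hc : ∀ t, t₀ ≤ t → g t = c → 0 < g' t) :
    ∀ t, t₀ ≤ t → c < g t := by
  by_contra hcon
  push_neg at hcon
  obtain ⟨t₁, ht₁, hgt₁⟩ := hcon
  set S : Set ℝ := {t | t₀ ≤ t ∧ g t ≤ c} with hS
  have hSne : S.Nonempty := ⟨t₁, ht₁, hgt₁⟩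
  have hSbd : BddBelow S := ⟨t₀, fun x hx => hx.1⟩
  set u := sInf S with hu
  have hu₀ : t₀ ≤ u := le_csInf hSne fun x hx => hx.1
  have hgu_cont : ContinuousAt g u := (hg u (le_trans ht₀ hu₀)).continuousAt
  -- g u ≤ c
  have huc : g u ≤ c := by
    have hmem := csInf_mem_closure hSne hSbd
    rw [mem_closure_iff_seq_limit] at hmem
    obtain ⟨x, hxS, hxlim⟩ := hmem
    exact le_of_tendsto (hgu_cont.tendsto.comp hxlim)
      (Eventually.of_forall fun n => (hxS n).2)
  have hne : t₀ < u := by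
    rcases lt_or_eq_of_le hu₀ with h | h
    · exact h
    · exfalso; rw [← h] at huc; linarith
  -- before u, g > c
  have hbefore : ∀ t, t₀ ≤ t → t < u → c < g t := by
    intro t h1 h2
    by_contra h
    exact absurd (csInf_le hSbd ⟨h1, not_lt.1 h⟩) (not_le.2 h2)
  -- g u ≥ c by left continuity
  have hge : c ≤ g u := by
    have hne2 : (𝓝[<] u).NeBot := nhdsLT_neBot u
    have htd : Filter.Tendsto g (𝓝[<] u) (𝓝 (g u)) :=
      hgu_cont.tendsto.mono_left nhdsWithin_le_nhds
    refine ge_of_tendsto htd ?_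
    filter_upwards [Ioo_mem_nhdsLT hne] with t ht
    exact (hbefore t ht.1.le ht.2).le
  have hgueq : g u = c := le_antisymm huc hge
  have hd : 0 < g' u := hc u hu₀ hgueq
  -- slope positive near u from the left, contradiction
  have hslope := hasDerivAt_iff_tendsto_slope.mp (hg u (le_trans ht₀ hu₀))
  have hev : ∀ᶠ t in 𝓝[≠] u, 0 < slope g u t := hslope.eventually (eventually_gt_nhds hd)
  have hev' : ∀ᶠ t in 𝓝[<] u, 0 < slope g u t :=
    hev.filter_mono (nhdsWithin_mono u fun x hx => ne_of_lt hx)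
  have hev2 : ∀ᶠ t in 𝓝[<] u, t ∈ Ioo t₀ u := Ioo_mem_nhdsLT hne
  have hne2 : (𝓝[<] u).NeBot := nhdsLT_neBot u
  obtain ⟨t, hst, htIoo⟩ := (hev'.and hev2).exists
  have h1 : c < g t := hbefore t htIoo.1.le htIoo.2
  rw [slope_def_field] at hst
  have h2 : g t - g u < 0 := by
    by_contra h
    push_neg at h
    have : t - u < 0 := sub_neg.2 htIoo.2
    have := div_nonpos_of_nonneg_of_nonpos h this.le
    linarith
  rw [hgueq] at h2
  linarith

private lemma aux_inv_upper (g g' : ℝ → ℝ)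
    (hg : ∀ t : ℝ, 0 ≤ t → HasDerivAt g (g' t) t)
    {c t₀ : ℝ} (ht₀ : 0 ≤ t₀) (h0 : g t₀ < c)
    (hc : ∀ t, t₀ ≤ t → g t = c → g' t < 0) :
    ∀ t, t₀ ≤ t → g t < c := by
  intro t ht
  have := aux_inv_lower (fun x => -g x) (fun x => -g' x)
    (fun u hu => (hg u hu).neg) ht₀ (c := -c) (by simpa using neg_lt_neg h0)
    (fun u hu hgu => by
      have : g u = c := by linarith
      have := hc u hu this
      linarith) t ht
  linarith

private lemma aux_escape_up (g g' : ℝ → ℝ)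
    (hg : ∀ t : ℝ, 0 ≤ t → HasDerivAt g (g' t) t)
    {d ε t₀ : ℝ} (ht₀ : 0 ≤ t₀) (hε : 0 < ε)
    (h : ∀ t, t₀ ≤ t → g t < d → ε ≤ g' t) :
    ∃ t, t₀ ≤ t ∧ d ≤ g t := by
  by_contra hcon
  push_neg at hcon
  have hder : ∀ t, t₀ ≤ t → HasDerivAt (fun x => g x - ε * x) (g' t - ε) t := by
    intro t ht
    have h2 : HasDerivAt (fun x : ℝ => ε * x) ε t := by
      simpa using (hasDerivAt_id t).const_mul ε
    exact (hg t (le_trans ht₀ ht)).sub h2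
  have hmono : MonotoneOn (fun x => g x - ε * x) (Ici t₀) := by
    refine monotoneOn_of_deriv_nonneg (convex_Ici t₀) ?_ ?_ ?_
    · intro x hx
      exact ((hder x hx).continuousAt).continuousWithinAt
    · intro x hx
      rw [interior_Ici] at hx
      exact ((hder x (le_of_lt hx)).differentiableAt).differentiableWithinAt
    · intro x hx
      rw [interior_Ici] at hx
      rw [(hder x (le_of_lt hx)).deriv]
      have := h x (le_of_lt hx) (hcon x (le_of_lt hx))
      linarith
  have key : ∀ t, t₀ ≤ t → g t₀ + ε * (t - t₀) ≤ g t := by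
    intro t ht
    have := hmono self_mem_Ici (mem_Ici.2 ht) ht
    simp only at this
    nlinarith
  have h1 : g t₀ < d := hcon t₀ le_rfl
  have hq : 0 ≤ (d + 1 - g t₀) / ε := le_of_lt (div_pos (by linarith) hε)
  have h2 := key (t₀ + (d + 1 - g t₀) / ε) (by linarith)
  have h3 : ε * (t₀ + (d + 1 - g t₀) / ε - t₀) = d + 1 - g t₀ := by field_simp; ring
  have h4 := hcon (t₀ + (d + 1 - g t₀) / ε) (by linarith)
  linarith


private lemma aux_escape_down (g g' : ℝ → ℝ)
    (hg : ∀ t : ℝ, 0 ≤ t → HasDerivAt g (g' t) t)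
    {d ε t₀ : ℝ} (ht₀ : 0 ≤ t₀) (hε : 0 < ε)
    (h : ∀ t, t₀ ≤ t → d < g t → g' t ≤ -ε) :
    ∃ t, t₀ ≤ t ∧ g t ≤ d := by
  obtain ⟨t, ht, hgt⟩ := aux_escape_up (fun x => -g x) (fun x => -g' x)
    (fun t ht => (hg t ht).neg) ht₀ hε (d := -d)
    (fun t ht hlt => by
      have := h t ht (by linarith)
      linarith)
  exact ⟨t, ht, by linarith [hgt]⟩


private lemma aux_signs (r b s μ : ℝ) (hr : 0 < r) (hs : 1 < s) (hμ : 0 < μ) :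
    StrictAntiOn (fun x : ℝ => μ * (b + x ^ s) - r * x ^ (s - 1))
      (Icc 0 (r * (s - 1) / (μ * s))) ∧
    StrictMonoOn (fun x : ℝ => μ * (b + x ^ s) - r * x ^ (s - 1))
      (Ici (r * (s - 1) / (μ * s))) := by
  have hs0 : 0 < s := by linarith
  have hs1 : 0 < s - 1 := by linarith
  have hNc : 0 < r * (s - 1) / (μ * s) := by positivity
  have hcont : ∀ x : ℝ, ContinuousAt (fun x : ℝ => μ * (b + x ^ s) - r * x ^ (s - 1)) x := by
    intro x
    have h1 : ContinuousAt (fun x : ℝ => x ^ s) x :=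
      Real.continuousAt_rpow_const x s (Or.inr hs0.le)
    have h2 : ContinuousAt (fun x : ℝ => x ^ (s - 1)) x :=
      Real.continuousAt_rpow_const x (s - 1) (Or.inr hs1.le)
    exact (continuousAt_const.mul (continuousAt_const.add h1)).sub
      (continuousAt_const.mul h2)
  have hder : ∀ x : ℝ, 0 < x →
      HasDerivAt (fun x : ℝ => μ * (b + x ^ s) - r * x ^ (s - 1))
        (x ^ (s - 1) / x * (μ * s * x - r * (s - 1))) x := by
    intro x hx
    have h1 : HasDerivAt (fun x : ℝ => x ^ s) (s * x ^ (s - 1)) x :=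
      Real.hasDerivAt_rpow_const (Or.inl (ne_of_gt hx))
    have h2 : HasDerivAt (fun x : ℝ => x ^ (s - 1)) ((s - 1) * x ^ (s - 1 - 1)) x :=
      Real.hasDerivAt_rpow_const (Or.inl (ne_of_gt hx))
    have h3 := ((h1.const_add b).const_mul μ).sub (h2.const_mul r)
    have heq : μ * (s * x ^ (s - 1)) - r * ((s - 1) * x ^ (s - 1 - 1)) =
        x ^ (s - 1) / x * (μ * s * x - r * (s - 1)) := by
      rw [show s - 1 - 1 = s - 1 - 1 from rfl, Real.rpow_sub hx (s - 1) 1, Real.rpow_one]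
      field_simp
    rw [heq] at h3
    exact h3
  constructor
  · refine strictAntiOn_of_deriv_neg (convex_Icc _ _) ?_ ?_
    · exact fun x _ => (hcont x).continuousWithinAt
    · intro x hx
      rw [interior_Icc] at hx
      rw [(hder x hx.1).deriv]
      have hfac : 0 < x ^ (s - 1) / x := div_pos (Real.rpow_pos_of_pos hx.1 _) hx.1
      have : μ * s * x < r * (s - 1) := by
        have := hx.2
        rw [lt_div_iff₀ (by positivity : (0:ℝ) < μ * s)] at this
        linarith [this]
      exact mul_neg_of_pos_of_neg hfac (by linarith)
  · refine strictMonoOn_of_deriv_pos (convex_Ici _) ?_ ?_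
    · exact fun x _ => (hcont x).continuousWithinAt
    · intro x hx
      rw [interior_Ici] at hx
      have hx0 : 0 < x := lt_trans hNc hx
      rw [(hder x hx0).deriv]
      have hfac : 0 < x ^ (s - 1) / x := div_pos (Real.rpow_pos_of_pos hx0 _) hx0
      have hxi : r * (s - 1) / (μ * s) < x := hx
      have : r * (s - 1) < μ * s * x := by
        rw [div_lt_iff₀ (by positivity : (0:ℝ) < μ * s)] at hxi
        linarith
      exact mul_pos hfac (by linarith)

/-- For r, b > 0, s > 1, 0 < μ₁ ≤ μ_m with f(N_c(μ_m), μ_m) < 0, where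
f(N, μ) = μ(b + N^s) − rN^{s−1} and N_c(μ) = r(s−1)/(μs), and with
N₁⁻ < N_c(μ₁) < N₁⁺ the positive roots of f(·, μ₁) and
N_m⁻ < N_c(μ_m) < N_m⁺ those of f(·, μ_m): if N : [0, ∞) → (0, ∞) is
differentiable and satisfies
N(rN^{s−1}/(b + N^s) − μ_m) ≤ N′ ≤ N(rN^{s−1}/(b + N^s) − μ₁), then
(i) N(0) > N_m⁻ implies N_m⁺ ≤ liminf N ≤ limsup N ≤ N₁⁺, and
(ii) N(0) < N₁⁻ implies liminf N = 0. -/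
theorem stmt19 (r b s μ₁ μm : ℝ) (hr : 0 < r) (hb : 0 < b) (hs : 1 < s)
    (hμ₁ : 0 < μ₁) (h1m : μ₁ ≤ μm)
    (hneg : μm * (b + (r * (s - 1) / (μm * s)) ^ s) -
      r * (r * (s - 1) / (μm * s)) ^ (s - 1) < 0)
    (N1m N1p Nmm Nmp : ℝ)
    (hN1m_pos : 0 < N1m)
    (hN1m : μ₁ * (b + N1m ^ s) - r * N1m ^ (s - 1) = 0)
    (hN1m_lt : N1m < r * (s - 1) / (μ₁ * s))
    (hN1p : μ₁ * (b + N1p ^ s) - r * N1p ^ (s - 1) = 0)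
    (hN1p_gt : r * (s - 1) / (μ₁ * s) < N1p)
    (hNmm_pos : 0 < Nmm)
    (hNmm : μm * (b + Nmm ^ s) - r * Nmm ^ (s - 1) = 0)
    (hNmm_lt : Nmm < r * (s - 1) / (μm * s))
    (hNmp : μm * (b + Nmp ^ s) - r * Nmp ^ (s - 1) = 0)
    (hNmp_gt : r * (s - 1) / (μm * s) < Nmp)
    (N N' : ℝ → ℝ)
    (hNpos : ∀ t : ℝ, 0 ≤ t → 0 < N t)
    (hderiv : ∀ t : ℝ, 0 ≤ t → HasDerivAt N (N' t) t)
    (hlow : ∀ t : ℝ, 0 ≤ t →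
      N t * (r * N t ^ (s - 1) / (b + N t ^ s) - μm) ≤ N' t)
    (hhigh : ∀ t : ℝ, 0 ≤ t →
      N' t ≤ N t * (r * N t ^ (s - 1) / (b + N t ^ s) - μ₁)) :
    (Nmm < N 0 →
      Nmp ≤ liminf N atTop ∧ limsup N atTop ≤ N1p) ∧
    (N 0 < N1m → liminf N atTop = 0) := by
  have hs1 : (0:ℝ) < s - 1 := by linarith
  have hs0 : (0:ℝ) < s := by linarith
  have hμm : 0 < μm := lt_of_lt_of_le hμ₁ h1m
  have hNc1pos : 0 < r * (s - 1) / (μ₁ * s) := by positivity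
  have hNcmpos : 0 < r * (s - 1) / (μm * s) := by positivity
  have hN1p_pos : 0 < N1p := lt_trans hNc1pos hN1p_gt
  have hNmp_pos : 0 < Nmp := lt_trans hNcmpos hNmp_gt
  obtain ⟨hA1, hM1⟩ := aux_signs r b s μ₁ hr hs hμ₁
  obtain ⟨hAm, hMm⟩ := aux_signs r b s μm hr hs hμm
  -- sign facts
  have hF1_pos_hi : ∀ x, N1p < x → 0 < μ₁ * (b + x ^ s) - r * x ^ (s - 1) := by
    intro x hx
    have := hM1 (Set.mem_Ici.2 hN1p_gt.le)
      (Set.mem_Ici.2 (le_trans hN1p_gt.le hx.le)) hx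
    simp only at this
    linarith
  have hF1_pos_lo : ∀ x, 0 < x → x < N1m → 0 < μ₁ * (b + x ^ s) - r * x ^ (s - 1) := by
    intro x hx0 hx
    have := hA1 ⟨hx0.le, le_of_lt (lt_trans hx hN1m_lt)⟩
      ⟨hN1m_pos.le, hN1m_lt.le⟩ hx
    simp only at this
    linarith
  have hFm_neg : ∀ x, Nmm < x → x < Nmp →
      μm * (b + x ^ s) - r * x ^ (s - 1) < 0 := by
    intro x h1 h2
    rcases le_total x (r * (s - 1) / (μm * s)) with h | h
    · have := hAm ⟨hNmm_pos.le, hNmm_lt.le⟩ ⟨(lt_trans hNmm_pos h1).le, h⟩ h1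
      simp only at this
      linarith
    · have := hMm (Set.mem_Ici.2 h) (Set.mem_Ici.2 hNmp_gt.le) h2
      simp only at this
      linarith
  -- positivity of the denominator
  have hBpos : ∀ x : ℝ, 0 < x → 0 < b + x ^ s := by
    intro x hx
    have := Real.rpow_pos_of_pos hx s
    linarith
  -- rewritten differential inequalities
  have hup : ∀ t, 0 ≤ t →
      N' t ≤ -(N t * (μ₁ * (b + N t ^ s) - r * N t ^ (s - 1))) / (b + N t ^ s) := by
    intro t ht
    have hB := hBpos (N t) (hNpos t ht)
    have heq : N t * (r * N t ^ (s - 1) / (b + N t ^ s) - μ₁)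
        = -(N t * (μ₁ * (b + N t ^ s) - r * N t ^ (s - 1))) / (b + N t ^ s) := by
      field_simp
      ring
    rw [← heq]
    exact hhigh t ht
  have hdn : ∀ t, 0 ≤ t →
      -(N t * (μm * (b + N t ^ s) - r * N t ^ (s - 1))) / (b + N t ^ s) ≤ N' t := by
    intro t ht
    have hB := hBpos (N t) (hNpos t ht)
    have heq : N t * (r * N t ^ (s - 1) / (b + N t ^ s) - μm)
        = -(N t * (μm * (b + N t ^ s) - r * N t ^ (s - 1))) / (b + N t ^ s) := by
      field_simp
      ring
    rw [← heq]
    exact hlow t ht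
  -- boundary helpers
  have hbu : ∀ e : ℝ, 0 < e → 0 < μ₁ * (b + e ^ s) - r * e ^ (s - 1) →
      ∀ t, 0 ≤ t → N t = e → N' t < 0 := by
    intro e he hF t ht hNt
    have h1 := hup t ht
    have hB := hBpos (N t) (hNpos t ht)
    rw [hNt] at h1 hB
    have h2 : -(e * (μ₁ * (b + e ^ s) - r * e ^ (s - 1))) / (b + e ^ s) < 0 :=
      div_neg_of_neg_of_pos (neg_lt_zero.2 (mul_pos he hF)) hB
    linarith
  have hbl : ∀ e : ℝ, 0 < e → μm * (b + e ^ s) - r * e ^ (s - 1) < 0 →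
      ∀ t, 0 ≤ t → N t = e → 0 < N' t := by
    intro e he hF t ht hNt
    have h1 := hdn t ht
    have hB := hBpos (N t) (hNpos t ht)
    rw [hNt] at h1 hB
    have h2 : 0 < -(e * (μm * (b + e ^ s) - r * e ^ (s - 1))) / (b + e ^ s) :=
      div_pos (by nlinarith) hB
    linarith
  -- eventual upper bound by any d > N1p
  have hlimsupAll : ∀ d, N1p < d → ∃ t₂, 0 ≤ t₂ ∧ ∀ t, t₂ ≤ t → N t < d := by
    intro d hd
    have hd0 : 0 < d := lt_trans hN1p_pos hd
    obtain ⟨M, hNM, hdM⟩ : ∃ M, N 0 < M ∧ d < M :=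
      ⟨max (N 0) d + 1, by have := le_max_left (N 0) d; linarith,
        by have := le_max_right (N 0) d; linarith⟩
    have hMN1p : N1p < M := lt_trans hd hdM
    have hM0 : 0 < M := lt_trans hd0 hdM
    have hMinv : ∀ t, 0 ≤ t → N t < M :=
      aux_inv_upper N N' hderiv le_rfl hNM
        (fun t ht hNt => hbu M hM0 (hF1_pos_hi M hMN1p) t ht hNt)
    obtain ⟨d', hd'1, hd'2⟩ := exists_between hd
    have hd'0 : 0 < d' := lt_trans hN1p_pos hd'1
    have hFd' : 0 < μ₁ * (b + d' ^ s) - r * d' ^ (s - 1) := hF1_pos_hi d' hd'1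
    have hBM : 0 < b + M ^ s := hBpos M hM0
    have hεpos : 0 < d' * (μ₁ * (b + d' ^ s) - r * d' ^ (s - 1)) / (b + M ^ s) :=
      div_pos (mul_pos hd'0 hFd') hBM
    have hgrow : ∀ t, 0 ≤ t → d' < N t →
        N' t ≤ -(d' * (μ₁ * (b + d' ^ s) - r * d' ^ (s - 1)) / (b + M ^ s)) := by
      intro t ht hgt
      have hpos := hNpos t ht
      have hB := hBpos (N t) hpos
      have hFmono : μ₁ * (b + d' ^ s) - r * d' ^ (s - 1) ≤
          μ₁ * (b + N t ^ s) - r * N t ^ (s - 1) := by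
        have := hM1.monotoneOn (Set.mem_Ici.2 (le_trans hN1p_gt.le hd'1.le))
          (Set.mem_Ici.2 (le_trans (le_trans hN1p_gt.le hd'1.le) hgt.le)) hgt.le
        simpa using this
      have hnum : d' * (μ₁ * (b + d' ^ s) - r * d' ^ (s - 1)) ≤
          N t * (μ₁ * (b + N t ^ s) - r * N t ^ (s - 1)) :=
        mul_le_mul hgt.le hFmono hFd'.le hpos.le
      have hden : b + N t ^ s ≤ b + M ^ s := by
        have := Real.rpow_le_rpow hpos.le (hMinv t ht).le hs0.le
        linarith
      have hdiv : d' * (μ₁ * (b + d' ^ s) - r * d' ^ (s - 1)) / (b + M ^ s) ≤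
          N t * (μ₁ * (b + N t ^ s) - r * N t ^ (s - 1)) / (b + N t ^ s) :=
        div_le_div₀ (le_trans (mul_pos hd'0 hFd').le hnum) hnum hB hden
      have h1 := hup t ht
      rw [neg_div] at h1
      linarith
    obtain ⟨t₁, ht₁0, ht₁⟩ := aux_escape_down N N' hderiv le_rfl hεpos hgrow
    refine ⟨t₁, ht₁0, ?_⟩
    exact aux_inv_upper N N' hderiv ht₁0 (lt_of_le_of_lt ht₁ hd'2)
      (fun t ht hNt => hbu d hd0 (hF1_pos_hi d hd) t (le_trans ht₁0 ht) hNt)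
  have hNmmNmp : Nmm < Nmp := lt_trans hNmm_lt hNmp_gt
  constructor
  · -- part (i)
    intro h0
    have hliminfAll : ∀ c, Nmm < c → c < Nmp →
        ∃ t₂, 0 ≤ t₂ ∧ ∀ t, t₂ ≤ t → c < N t := by
      intro c hcNmm hcNmp
      have hc0 : 0 < c := lt_trans hNmm_pos hcNmm
      obtain ⟨a, ha1, ha2⟩ := exists_between (lt_min h0 hcNmm)
      have ha0 : 0 < a := lt_trans hNmm_pos ha1
      have haN0 : a < N 0 := lt_of_lt_of_le ha2 (min_le_left _ _)
      have hac : a < c := lt_of_lt_of_le ha2 (min_le_right _ _)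
      have hFa : μm * (b + a ^ s) - r * a ^ (s - 1) < 0 :=
        hFm_neg a ha1 (lt_trans hac hcNmp)
      have hainv : ∀ t, 0 ≤ t → a < N t :=
        aux_inv_lower N N' hderiv le_rfl haN0
          (fun t ht hNt => hbl a ha0 hFa t ht hNt)
      obtain ⟨c', hc'1, hc'2⟩ := exists_between hcNmp
      have hc'0 : 0 < c' := lt_trans hc0 hc'1
      have hFc' : μm * (b + c' ^ s) - r * c' ^ (s - 1) < 0 :=
        hFm_neg c' (lt_trans hcNmm hc'1) hc'2
      obtain ⟨m0, hm01, hm02, hm03⟩ : ∃ m0, 0 < m0 ∧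
          m0 ≤ -(μm * (b + a ^ s) - r * a ^ (s - 1)) ∧
          m0 ≤ -(μm * (b + c' ^ s) - r * c' ^ (s - 1)) :=
        ⟨min (-(μm * (b + a ^ s) - r * a ^ (s - 1)))
          (-(μm * (b + c' ^ s) - r * c' ^ (s - 1))),
          lt_min (by linarith) (by linarith), min_le_left _ _, min_le_right _ _⟩
      have hεpos : 0 < a * m0 / (b + c' ^ s) :=
        div_pos (mul_pos ha0 hm01) (hBpos c' hc'0)
      have hgrow : ∀ t, 0 ≤ t → N t < c' → a * m0 / (b + c' ^ s) ≤ N' t := by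
        intro t ht hlt
        have hat := hainv t ht
        have hpos := hNpos t ht
        have hB := hBpos (N t) hpos
        have hFNt : μm * (b + N t ^ s) - r * N t ^ (s - 1) ≤ -m0 := by
          rcases le_total (N t) (r * (s - 1) / (μm * s)) with hcase | hcase
          · have := hAm ⟨ha0.le, le_trans hat.le hcase⟩ ⟨hpos.le, hcase⟩ hat
            simp only at this
            linarith
          · have := hMm (Set.mem_Ici.2 hcase)
              (Set.mem_Ici.2 (le_trans hcase hlt.le)) hlt
            simp only at this
            linarith
        have hnum : a * m0 ≤ N t * -(μm * (b + N t ^ s) - r * N t ^ (s - 1)) :=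
          mul_le_mul hat.le (by linarith) hm01.le hpos.le
        have hden : b + N t ^ s ≤ b + c' ^ s := by
          have := Real.rpow_le_rpow hpos.le hlt.le hs0.le
          linarith
        have hdiv : a * m0 / (b + c' ^ s) ≤
            N t * -(μm * (b + N t ^ s) - r * N t ^ (s - 1)) / (b + N t ^ s) :=
          div_le_div₀ (le_trans (mul_pos ha0 hm01).le hnum) hnum hB hden
        rw [mul_neg] at hdiv
        have h1 := hdn t ht
        linarith
      obtain ⟨t₁, ht₁0, ht₁⟩ :=
        aux_escape_up N N' hderiv le_rfl hεpos hgrow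
      refine ⟨t₁, ht₁0, ?_⟩
      exact aux_inv_lower N N' hderiv ht₁0 (lt_of_lt_of_le hc'1 ht₁)
        (fun t ht hNt =>
          hbl c hc0 (hFm_neg c hcNmm hcNmp) t (le_trans ht₁0 ht) hNt)
    -- cobounded facts
    obtain ⟨T₂, hT₂0, hT₂⟩ := hlimsupAll (N1p + 1) (by linarith)
    have hcob_le : IsCoboundedUnder (· ≤ ·) atTop N :=
      isCoboundedUnder_le_of_eventually_le atTop (x := 0)
        (eventually_atTop.2 ⟨0, fun t ht => (hNpos t ht).le⟩)
    have hcob_ge : IsCoboundedUnder (· ≥ ·) atTop N :=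
      isCoboundedUnder_ge_of_eventually_le atTop (x := N1p + 1)
        (eventually_atTop.2 ⟨T₂, fun t ht => (hT₂ t ht).le⟩)
    constructor
    · -- Nmp ≤ liminf
      by_contra hL
      push_neg at hL
      obtain ⟨c, hc1, hc2⟩ := exists_between (max_lt hNmmNmp hL :
        max Nmm (liminf N atTop) < Nmp)
      obtain ⟨t₂, ht₂0, ht₂⟩ := hliminfAll c
        (lt_of_le_of_lt (le_max_left _ _) hc1) hc2
      have hle : c ≤ liminf N atTop :=
        le_liminf_of_le hcob_ge
          (eventually_atTop.2 ⟨t₂, fun t ht => (ht₂ t ht).le⟩)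
      have : liminf N atTop < c := lt_of_le_of_lt (le_max_right Nmm _) hc1
      linarith
    · -- limsup ≤ N1p
      by_contra hL
      push_neg at hL
      obtain ⟨d, hd1, hd2⟩ := exists_between hL
      obtain ⟨t₂, ht₂0, ht₂⟩ := hlimsupAll d hd1
      have : limsup N atTop ≤ d :=
        limsup_le_of_le hcob_le
          (eventually_atTop.2 ⟨t₂, fun t ht => (ht₂ t ht).le⟩)
      linarith
  · -- part (ii)
    intro h0
    have hN00 : 0 < N 0 := hNpos 0 le_rfl
    obtain ⟨dd, hdd1, hdd2⟩ := exists_between h0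
    have hdd0 : 0 < dd := lt_trans hN00 hdd1
    have hinv : ∀ t, 0 ≤ t → N t < dd :=
      aux_inv_upper N N' hderiv le_rfl hdd1
        (fun t ht hNt => hbu dd hdd0 (hF1_pos_lo dd hdd0 hdd2) t ht hNt)
    have hddNc : dd ≤ r * (s - 1) / (μ₁ * s) := le_of_lt (lt_trans hdd2 hN1m_lt)
    have hFdd : 0 < μ₁ * (b + dd ^ s) - r * dd ^ (s - 1) :=
      hF1_pos_lo dd hdd0 hdd2
    have htend : Tendsto N atTop (𝓝 0) := by
      rw [tendsto_order]
      constructor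
      · intro c hc
        exact eventually_atTop.2 ⟨0, fun t ht => lt_trans hc (hNpos t ht)⟩
      · intro c hc
        have he0 : 0 < min c dd := lt_min hc hdd0
        have hedd : min c dd ≤ dd := min_le_right _ _
        have hε2pos : 0 < min c dd / 2 * (μ₁ * (b + dd ^ s) - r * dd ^ (s - 1)) /
            (b + dd ^ s) :=
          div_pos (mul_pos (by linarith) hFdd) (hBpos dd hdd0)
        have hgrow : ∀ t, 0 ≤ t → min c dd / 2 < N t →
            N' t ≤ -(min c dd / 2 * (μ₁ * (b + dd ^ s) - r * dd ^ (s - 1)) /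
              (b + dd ^ s)) := by
          intro t ht hgt
          have hpos := hNpos t ht
          have hB := hBpos (N t) hpos
          have hltdd := hinv t ht
          have hFmono : μ₁ * (b + dd ^ s) - r * dd ^ (s - 1) ≤
              μ₁ * (b + N t ^ s) - r * N t ^ (s - 1) := by
            have := hA1 ⟨hpos.le, le_trans hltdd.le hddNc⟩ ⟨hdd0.le, hddNc⟩ hltdd
            simp only at this
            linarith
          have hnum : min c dd / 2 * (μ₁ * (b + dd ^ s) - r * dd ^ (s - 1)) ≤
              N t * (μ₁ * (b + N t ^ s) - r * N t ^ (s - 1)) :=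
            mul_le_mul hgt.le hFmono hFdd.le hpos.le
          have hden : b + N t ^ s ≤ b + dd ^ s := by
            have := Real.rpow_le_rpow hpos.le hltdd.le hs0.le
            linarith
          have hdiv : min c dd / 2 * (μ₁ * (b + dd ^ s) - r * dd ^ (s - 1)) /
              (b + dd ^ s) ≤
              N t * (μ₁ * (b + N t ^ s) - r * N t ^ (s - 1)) / (b + N t ^ s) :=
            div_le_div₀ (le_trans (mul_pos (by linarith) hFdd).le hnum) hnum hB hden
          have h1 := hup t ht
          rw [neg_div] at h1
          linarith
        obtain ⟨t₁, ht₁0, ht₁⟩ :=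
          aux_escape_down N N' hderiv le_rfl hε2pos hgrow
        have hFe : 0 < μ₁ * (b + (min c dd) ^ s) - r * (min c dd) ^ (s - 1) :=
          hF1_pos_lo _ he0 (lt_of_le_of_lt hedd hdd2)
        have hfin : ∀ t, t₁ ≤ t → N t < min c dd :=
          aux_inv_upper N N' hderiv ht₁0 (lt_of_le_of_lt ht₁ (by linarith))
            (fun t ht hNt => hbu _ he0 hFe t (le_trans ht₁0 ht) hNt)
        exact eventually_atTop.2
          ⟨t₁, fun t ht => lt_of_lt_of_le (hfin t ht) (min_le_left _ _)⟩
    exact htend.liminf_eq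
end
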